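/- arXiv:2309.07962 — 5 statements merged into one kernel-verified Lean document; each statement's English description precedes it below -/
import Mathlib

section
/- Let K be a commutative ring and let n ≥ 2. Then for every k > n the weight-k component U(K^n)_k is the zero submodule; equivalently, every product of more than n elements of V vanishes in U(K^n). -/
/-!
Universal enveloping algebra of the abelian alternative algebra `K^n`.

`T = Tens_K(K^n ⊕ K^n)`; `l_a` (resp. `r_a`) is the image of `(a,0)` (resp. `(0,a)`).
`U(K^n)` is the quotient of `T` by the two-sided ideal generated by
`l_a·l_a`, `r_a·r_a`, `l_b·l_a + r_a·r_b`, `r_b·l_a − l_a·r_b − r_a·r_b`.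
-/

noncomputable section

/-- `l_a ∈ Tens_K(K^n ⊕ K^n)`. -/
def lT (K : Type) [CommRing K] (n : ℕ) (a : Fin n → K) :
    TensorAlgebra K ((Fin n → K) × (Fin n → K)) :=
  TensorAlgebra.ι K (a, 0)

/-- `r_a ∈ Tens_K(K^n ⊕ K^n)`. -/
def rT (K : Type) [CommRing K] (n : ℕ) (a : Fin n → K) :
    TensorAlgebra K ((Fin n → K) × (Fin n → K)) :=
  TensorAlgebra.ι K (0, a)

/-- The relations defining `U(K^n)`: quotienting by this relation is the same as
quotienting by the two-sided ideal generated by the listed elements. -/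
inductive URel (K : Type) [CommRing K] (n : ℕ) :
    TensorAlgebra K ((Fin n → K) × (Fin n → K)) →
    TensorAlgebra K ((Fin n → K) × (Fin n → K)) → Prop
  | ll (a : Fin n → K) : URel K n (lT K n a * lT K n a) 0
  | rr (a : Fin n → K) : URel K n (rT K n a * rT K n a) 0
  | llrr (a b : Fin n → K) : URel K n (lT K n b * lT K n a + rT K n a * rT K n b) 0
  | rl (a b : Fin n → K) :
      URel K n (rT K n b * lT K n a - lT K n a * rT K n b - rT K n a * rT K n b) 0

/-- The universal enveloping algebra `U(K^n)`. -/
def Ualg (K : Type) [CommRing K] (n : ℕ) : Type := RingQuot (URel K n)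

instance (K : Type) [CommRing K] (n : ℕ) : Ring (Ualg K n) :=
  inferInstanceAs (Ring (RingQuot (URel K n)))

instance (K : Type) [CommRing K] (n : ℕ) : Algebra K (Ualg K n) :=
  inferInstanceAs (Algebra K (RingQuot (URel K n)))

/-- Image of `l_a` in `U(K^n)`. -/
def lU (K : Type) [CommRing K] (n : ℕ) (a : Fin n → K) : Ualg K n :=
  RingQuot.mkAlgHom K (URel K n) (lT K n a)

/-- Image of `r_a` in `U(K^n)`. -/
def rU (K : Type) [CommRing K] (n : ℕ) (a : Fin n → K) : Ualg K n :=
  RingQuot.mkAlgHom K (URel K n) (rT K n a)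

/-- The weight-one part `V ⊆ U(K^n)`: the span of all `l_a` and `r_a`. -/
def V (K : Type) [CommRing K] (n : ℕ) : Submodule K (Ualg K n) :=
  Submodule.span K (Set.range (lU K n) ∪ Set.range (rU K n))


namespace UWeight

variable {K : Type} [CommRing K] {n : ℕ}

/-- basis vectors of `K^n` -/
def e (K : Type) [CommRing K] (n : ℕ) (i : Fin n) : Fin n → K := Pi.single i 1

lemma lU_add (a b : Fin n → K) : lU K n (a + b) = lU K n a + lU K n b := by
  unfold lU lT
  rw [show ((a + b : Fin n → K), (0 : Fin n → K)) = (a, 0) + (b, 0) by simp [Prod.ext_iff],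
    map_add, map_add]
  rfl

lemma rU_add (a b : Fin n → K) : rU K n (a + b) = rU K n a + rU K n b := by
  unfold rU rT
  rw [show ((0 : Fin n → K), (a + b : Fin n → K)) = (0, a) + (0, b) by simp [Prod.ext_iff],
    map_add, map_add]
  rfl

lemma lU_smul (c : K) (a : Fin n → K) : lU K n (c • a) = c • lU K n a := by
  unfold lU lT
  rw [show ((c • a : Fin n → K), (0 : Fin n → K)) = c • (a, 0) by simp [Prod.ext_iff],
    map_smul, map_smul]
  rfl

lemma rU_smul (c : K) (a : Fin n → K) : rU K n (c • a) = c • rU K n a := by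
  unfold rU rT
  rw [show ((0 : Fin n → K), (c • a : Fin n → K)) = c • (0, a) by simp [Prod.ext_iff],
    map_smul, map_smul]
  rfl

/-- `lU` as a linear map. -/
def lUlin (K : Type) [CommRing K] (n : ℕ) : (Fin n → K) →ₗ[K] Ualg K n where
  toFun := lU K n
  map_add' := lU_add
  map_smul' c a := by simpa using lU_smul c a

/-- `rU` as a linear map. -/
def rUlin (K : Type) [CommRing K] (n : ℕ) : (Fin n → K) →ₗ[K] Ualg K n where
  toFun := rU K n
  map_add' := rU_add
  map_smul' c a := by simpa using rU_smul c a

lemma hll (a b : Fin n → K) : lU K n b * lU K n a = -(rU K n a * rU K n b) := by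
  have h := RingQuot.mkAlgHom_rel K (URel.llrr (K := K) (n := n) a b)
  simp only [map_add, map_mul, map_zero] at h
  rw [eq_neg_iff_add_eq_zero]
  exact h

lemma hrl (a b : Fin n → K) :
    rU K n b * lU K n a = lU K n a * rU K n b + rU K n a * rU K n b := by
  have h := RingQuot.mkAlgHom_rel K (URel.rl (K := K) (n := n) a b)
  simp only [map_sub, map_mul, map_zero] at h
  rw [sub_sub] at h
  exact sub_eq_zero.mp h

lemma hrr (a : Fin n → K) : rU K n a * rU K n a = 0 := by
  have h := RingQuot.mkAlgHom_rel K (URel.rr (K := K) (n := n) a)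
  simp only [map_mul, map_zero] at h
  exact h

lemma hllself (a : Fin n → K) : lU K n a * lU K n a = 0 := by
  have h := RingQuot.mkAlgHom_rel K (URel.ll (K := K) (n := n) a)
  simp only [map_mul, map_zero] at h
  exact h

lemma hrr2 (a b : Fin n → K) : rU K n b * rU K n a = -(rU K n a * rU K n b) := by
  have h := hrr (a + b)
  rw [rU_add, add_mul, mul_add, mul_add, hrr a, hrr b, zero_add, add_zero] at h
  rw [eq_neg_iff_add_eq_zero, add_comm]
  exact h

/-- key derived relation: `L_a R_a R_c = 0`. -/
lemma key (a c : Fin n → K) : lU K n a * (rU K n a * rU K n c) = 0 := by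
  have h1 : lU K n c * lU K n a * lU K n a = -(lU K n a * (rU K n a * rU K n c)) := by
    rw [hll a c, neg_mul, mul_assoc, hrl a c, mul_add, ← mul_assoc, ← mul_assoc,
      hrl a a, hrr a, add_zero, zero_mul, add_zero, mul_assoc]
  have h2 : lU K n c * lU K n a * lU K n a = 0 := by
    rw [mul_assoc, hllself, mul_zero]
  rw [h2, eq_comm, neg_eq_zero] at h1
  exact h1

/-- polarized: `L_b R_a R_c = -(L_a R_b R_c)`. -/
lemma key2 (a b c : Fin n → K) :
    lU K n b * (rU K n a * rU K n c) = -(lU K n a * (rU K n b * rU K n c)) := by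
  have h := key (a + b) c
  rw [lU_add, rU_add, add_mul, add_mul, mul_add, mul_add, key a c, key b c,
    zero_add, add_zero] at h
  rw [eq_neg_iff_add_eq_zero, add_comm]
  exact h

/-- product of `r`-generators indexed by a list of basis indices -/
def Rw (K : Type) [CommRing K] (n : ℕ) (s : List (Fin n)) : Ualg K n :=
  (s.map fun i => rU K n (e K n i)).prod

@[simp] lemma Rw_nil : Rw K n [] = 1 := rfl

@[simp] lemma Rw_cons (i : Fin n) (s : List (Fin n)) :
    Rw K n (i :: s) = rU K n (e K n i) * Rw K n s := by
  simp [Rw]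

lemma lemA {i : Fin n} : ∀ {s : List (Fin n)}, i ∈ s → rU K n (e K n i) * Rw K n s = 0 := by
  intro s
  induction s with
  | nil => intro h; simp at h
  | cons j t ih =>
    intro h
    rw [Rw_cons, ← mul_assoc]
    rcases List.mem_cons.mp h with h | h
    · subst h; rw [hrr, zero_mul]
    · rw [hrr2, neg_mul, mul_assoc, ih h, mul_zero, neg_zero]

lemma lemB : ∀ {s : List (Fin n)}, ¬ s.Nodup → Rw K n s = 0 := by
  intro s
  induction s with
  | nil => intro h; exact absurd List.nodup_nil h
  | cons j t ih =>
    intro h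
    rw [List.nodup_cons] at h
    push_neg at h
    rw [Rw_cons]
    by_cases hj : j ∈ t
    · exact lemA hj
    · rw [ih (h hj), mul_zero]

lemma lemC {x : Fin n} {s : List (Fin n)} (hx : x ∈ s) (hs : 2 ≤ s.length) :
    lU K n (e K n x) * Rw K n s = 0 := by
  match s, hs, hx with
  | j :: c :: t, _, hx =>
    rcases List.mem_cons.mp hx with h | h
    · subst h
      rw [Rw_cons, Rw_cons, ← mul_assoc, ← mul_assoc,
        mul_assoc (lU K n (e K n x)) (rU K n (e K n x)) (rU K n (e K n c)), key, zero_mul]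
    · rw [Rw_cons, Rw_cons, ← mul_assoc, ← mul_assoc,
        mul_assoc (lU K n (e K n x)) (rU K n (e K n j)) (rU K n (e K n c)), key2, neg_mul,
        mul_assoc, mul_assoc, ← Rw_cons, lemA h, mul_zero, neg_zero]

/-- normal forms of weight `k` -/
def NFset (K : Type) [CommRing K] (n k : ℕ) : Set (Ualg K n) :=
  {x | ∃ s : List (Fin n), s.length = k ∧ x = Rw K n s} ∪
  {x | ∃ (j : Fin n) (t : List (Fin n)), t.length + 1 = k ∧ x = lU K n (e K n j) * Rw K n t}

def NF (K : Type) [CommRing K] (n k : ℕ) : Submodule K (Ualg K n) :=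
  Submodule.span K (NFset K n k)

lemma V_le_NF1 : V K n ≤ NF K n 1 := by
  rw [V, Submodule.span_le]
  rintro x (⟨a, rfl⟩ | ⟨a, rfl⟩)
  · have ha : lU K n a = ∑ i : Fin n, a i • lU K n (e K n i) := by
      calc lU K n a = lUlin K n (∑ i : Fin n, Pi.single i (a i)) := by
            rw [Finset.univ_sum_single]; rfl
        _ = ∑ i : Fin n, lUlin K n (Pi.single i (a i)) := map_sum _ _ _
        _ = ∑ i : Fin n, a i • lU K n (e K n i) := by
            refine Finset.sum_congr rfl fun i _ => ?_
            have : Pi.single i (a i) = a i • e K n i := by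
              rw [e, ← Pi.single_smul, smul_eq_mul, mul_one]
            rw [this]
            exact (lUlin K n).map_smul _ _
    rw [ha]
    refine Submodule.sum_mem _ fun i _ => Submodule.smul_mem _ _ ?_
    refine Submodule.subset_span (Or.inr ⟨i, [], rfl, ?_⟩)
    simp
  · have ha : rU K n a = ∑ i : Fin n, a i • rU K n (e K n i) := by
      calc rU K n a = rUlin K n (∑ i : Fin n, Pi.single i (a i)) := by
            rw [Finset.univ_sum_single]; rfl
        _ = ∑ i : Fin n, rUlin K n (Pi.single i (a i)) := map_sum _ _ _
        _ = ∑ i : Fin n, a i • rU K n (e K n i) := by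
            refine Finset.sum_congr rfl fun i _ => ?_
            have : Pi.single i (a i) = a i • e K n i := by
              rw [e, ← Pi.single_smul, smul_eq_mul, mul_one]
            rw [this]
            exact (rUlin K n).map_smul _ _
    rw [ha]
    refine Submodule.sum_mem _ fun i _ => Submodule.smul_mem _ _ ?_
    refine Submodule.subset_span (Or.inl ⟨[i], rfl, ?_⟩)
    simp

lemma NF1_mul_NF (m : ℕ) : NF K n 1 * NF K n m ≤ NF K n (m + 1) := by
  rw [NF, NF, Submodule.span_mul_span, Submodule.span_le]
  rintro z ⟨u, hu, v, hv, rfl⟩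
  show u * v ∈ (NF K n (m + 1) : Submodule K (Ualg K n))
  rcases hv with ⟨s, hs, rfl⟩ | ⟨x, t, ht, rfl⟩ <;>
    rcases hu with ⟨s', hs', rfl⟩ | ⟨j, t', ht', rfl⟩
  · -- u = Rw s' with |s'| = 1, v = Rw s
    match s', hs' with
    | [i], _ =>
      have h : Rw K n [i] * Rw K n s = Rw K n (i :: s) := by simp
      rw [h]
      exact Submodule.subset_span (Or.inl ⟨i :: s, by simp [hs], rfl⟩)
  · -- u = lU e_j * Rw t' with |t'| = 0, v = Rw s
    match t', ht' with
    | [], _ =>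
      have h : (lU K n (e K n j) * Rw K n []) * Rw K n s = lU K n (e K n j) * Rw K n s := by
        rw [Rw_nil, mul_one]
      rw [h]
      exact Submodule.subset_span (Or.inr ⟨j, s, by omega, rfl⟩)
  · -- u = Rw [i], v = lU e_x * Rw t
    match s', hs' with
    | [i], _ =>
      have h : Rw K n [i] * (lU K n (e K n x) * Rw K n t)
          = lU K n (e K n x) * Rw K n (i :: t) + Rw K n (x :: i :: t) := by
        simp only [Rw_cons, Rw_nil, mul_one]
        rw [← mul_assoc, hrl, add_mul, mul_assoc, mul_assoc]
      rw [h]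
      refine Submodule.add_mem _ ?_ ?_
      · exact Submodule.subset_span (Or.inr ⟨x, i :: t, by simp [← ht], rfl⟩)
      · exact Submodule.subset_span (Or.inl ⟨x :: i :: t, by simp [← ht], rfl⟩)
  · -- u = lU e_j * Rw [], v = lU e_x * Rw t
    match t', ht' with
    | [], _ =>
      have h : (lU K n (e K n j) * Rw K n []) * (lU K n (e K n x) * Rw K n t)
          = -(Rw K n (x :: j :: t)) := by
        simp only [Rw_cons, Rw_nil, mul_one]
        rw [← mul_assoc, hll, neg_mul, mul_assoc]
      rw [h]
      refine Submodule.neg_mem _ ?_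
      exact Submodule.subset_span (Or.inl ⟨x :: j :: t, by simp [← ht], rfl⟩)

lemma Vpow_le_NF (K : Type) [CommRing K] (n : ℕ) (k : ℕ) : V K n ^ k ≤ NF K n k := by
  induction k with
  | zero =>
    rw [pow_zero, Submodule.one_eq_span, Submodule.span_le]
    rintro x rfl
    exact Submodule.subset_span (Or.inl ⟨[], rfl, rfl⟩)
  | succ m ih =>
    rw [pow_succ']
    exact le_trans (mul_le_mul' V_le_NF1 ih) (NF1_mul_NF m)

lemma NF_eq_bot (K : Type) [CommRing K] {n : ℕ} (hn : 2 ≤ n) (k : ℕ) (hk : n < k) :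
    NF K n k = ⊥ := by
  rw [NF, Submodule.span_eq_bot]
  rintro x (⟨s, hs, rfl⟩ | ⟨j, t, ht, rfl⟩)
  · refine lemB fun hnd => ?_
    have h := hnd.length_le_card
    rw [hs, Fintype.card_fin] at h
    omega
  · by_cases hnd : t.Nodup
    · have hlen : t.length ≤ n := by
        have h := hnd.length_le_card
        rwa [Fintype.card_fin] at h
      have hj : j ∈ t := by
        by_contra hj
        have h2 : (j :: t).Nodup := List.nodup_cons.mpr ⟨hj, hnd⟩
        have h3 := h2.length_le_card
        rw [List.length_cons, Fintype.card_fin] at h3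
        omega
      exact lemC hj (by omega)
    · rw [lemB hnd, mul_zero]

end UWeight

/-- For `K` a commutative ring and `n ≥ 2`, the weight-`k` component of `U(K^n)` vanishes
for all `k > n`: every product of more than `n` elements of `V` is zero in `U(K^n)`. -/
theorem weight_component_eq_bot (K : Type) [CommRing K] (n : ℕ) (hn : 2 ≤ n)
    (k : ℕ) (hk : n < k) :
    V K n ^ k = (⊥ : Submodule K (Ualg K n)) := by
  have h1 := UWeight.Vpow_le_NF (K := K) (n := n) k
  rw [UWeight.NF_eq_bot K hn k hk] at h1
  exact le_bot_iff.mp h1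


end
end

section
/- Let K be any commutative ring and let n, k ≥ 0. Then the weight-k component U(K^n)_k is a free K-module of finite rank, and its rank equals 1 if k = 0, 2n if k = 1, (3n² − n)/2 if k = 2, and 2·(n choose k) if k ≥ 3. -/
/-!
Universal enveloping algebra of the abelian alternative algebra `K^n`.

`T = Tens_K(K^n ⊕ K^n)`; `l_a` (resp. `r_a`) is the image of `(a,0)` (resp. `(0,a)`).
`U(K^n)` is the quotient of `T` by the two-sided ideal generated by
`l_a·l_a`, `r_a·r_a`, `l_b·l_a + r_a·r_b`, `r_b·l_a − l_a·r_b − r_a·r_b`.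
-/

noncomputable section

namespace UEnv

/-- Basis index type for the model module. -/
inductive B (n : ℕ) : Type
  | emp : B n
  | l1 : Fin n → B n
  | r1 : Fin n → B n
  | l2 : Fin n → Fin n → B n
  | lw : Finset (Fin n) → B n
  | rw : Finset (Fin n) → B n
  deriving DecidableEq, Fintype

variable (K : Type) [CommRing K] {n : ℕ}

abbrev M (n : ℕ) := B n →₀ K

/-- sign of inserting `i` into a sorted word `s`. -/
def sgn (i : Fin n) (s : Finset (Fin n)) : K := (-1 : K) ^ (s.filter (· < i)).card

/-- guarded sign: zero if `i ∈ s`. -/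
def jsgn (i : Fin n) (s : Finset (Fin n)) : K := if i ∈ s then 0 else sgn K i s

lemma sgn_insert (i j : Fin n) (s : Finset (Fin n)) (h : j ∉ s) :
    sgn K i (insert j s) = (if j < i then -1 else 1) * sgn K i s := by
  unfold sgn
  rw [Finset.filter_insert]
  split_ifs with h1
  · rw [Finset.card_insert_of_notMem (by simp [h]), pow_succ]
    ring
  · rw [one_mul]

lemma jsgn_pair_swap (x y : Fin n) (s : Finset (Fin n)) :
    jsgn K x s * jsgn K y (insert x s) + jsgn K y s * jsgn K x (insert y s) = 0 := by
  unfold jsgn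
  by_cases hx : x ∈ s
  · simp [hx, Finset.mem_insert_of_mem hx]
  by_cases hy : y ∈ s
  · simp [hy, Finset.mem_insert_of_mem hy]
  by_cases hxy : x = y
  · subst hxy; simp [Finset.mem_insert_self]
  · have hxiy : x ∉ insert y s := by simp [hxy, hx]
    have hyix : y ∉ insert x s := by simp [Ne.symm hxy, hy]
    simp only [if_neg hx, if_neg hy, if_neg hxiy, if_neg hyix]
    rw [sgn_insert K y x s hx, sgn_insert K x y s hy]
    rcases lt_or_gt_of_ne (a := x) (b := y) hxy with h | h
    · rw [if_neg (asymm h), if_pos h]; ring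
    · rw [if_pos h, if_neg (asymm h)]; ring

/-- The set obtained after inserting the letters of `l` (head first) into `s`. -/
def Wst : List (Fin n) → Finset (Fin n) → Finset (Fin n)
  | [], s => s
  | i :: t, s => Wst t (insert i s)

/-- The accumulated sign. -/
def Wsig : List (Fin n) → Finset (Fin n) → K
  | [], _ => 1
  | i :: t, s => jsgn K i s * Wsig t (insert i s)

/-- canonical model element for the word given by `l` (head innermost) over base `s`,
with target basis constructor `f`. -/
def Wl (f : Finset (Fin n) → B n) (l : List (Fin n)) (s : Finset (Fin n)) : M K n :=
  Wsig K l s • Finsupp.single (f (Wst l s)) 1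

lemma Wst_swap (x y : Fin n) (v : List (Fin n)) (s : Finset (Fin n)) :
    Wst (x :: y :: v) s = Wst (y :: x :: v) s := by
  simp [Wst, Finset.insert_comm]

lemma Wsig_swap (x y : Fin n) (v : List (Fin n)) (s : Finset (Fin n)) :
    Wsig K (x :: y :: v) s + Wsig K (y :: x :: v) s = 0 := by
  simp only [Wsig]
  rw [Finset.insert_comm y x]
  rw [← mul_assoc, ← mul_assoc, ← add_mul]
  rw [jsgn_pair_swap]
  rw [zero_mul]

lemma Wl_cons (f : Finset (Fin n) → B n) (i : Fin n) (l : List (Fin n)) (s : Finset (Fin n)) :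
    Wl K f (i :: l) s = jsgn K i s • Wl K f l (insert i s) := by
  simp [Wl, Wsig, Wst, mul_smul]

lemma Wl_swap12 (f : Finset (Fin n) → B n) (x y : Fin n) (v : List (Fin n)) (s : Finset (Fin n)) :
    Wl K f (x :: y :: v) s = - Wl K f (y :: x :: v) s := by
  have h := Wsig_swap K x y v s
  unfold Wl
  rw [Wst_swap, eq_comm, neg_eq_iff_add_eq_zero, ← add_smul]
  rw [add_comm (Wsig K (y :: x :: v) s), h, zero_smul]

lemma Wl_swap23 (f : Finset (Fin n) → B n) (a x y : Fin n) (v : List (Fin n))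
    (s : Finset (Fin n)) :
    Wl K f (a :: x :: y :: v) s = - Wl K f (a :: y :: x :: v) s := by
  rw [Wl_cons, Wl_cons K f a (y :: x :: v), Wl_swap12, smul_neg]

lemma Wl_swap34 (f : Finset (Fin n) → B n) (a b x y : Fin n) (v : List (Fin n))
    (s : Finset (Fin n)) :
    Wl K f (a :: b :: x :: y :: v) s = - Wl K f (a :: b :: y :: x :: v) s := by
  rw [Wl_cons, Wl_cons K f a (b :: y :: x :: v), Wl_swap23, smul_neg]

lemma Wl_swap13 (f : Finset (Fin n) → B n) (x a y : Fin n) (v : List (Fin n))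
    (s : Finset (Fin n)) :
    Wl K f (x :: a :: y :: v) s = - Wl K f (y :: a :: x :: v) s := by
  rw [Wl_swap12, Wl_swap23, Wl_swap12]; simp

lemma Wl_swap24 (f : Finset (Fin n) → B n) (c x a y : Fin n) (v : List (Fin n))
    (s : Finset (Fin n)) :
    Wl K f (c :: x :: a :: y :: v) s = - Wl K f (c :: y :: a :: x :: v) s := by
  rw [Wl_cons, Wl_cons K f c (y :: a :: x :: v), Wl_swap13, smul_neg]

lemma Wl_dup12 (f : Finset (Fin n) → B n) (x : Fin n) (v : List (Fin n)) (s : Finset (Fin n)) :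
    Wl K f (x :: x :: v) s = 0 := by
  rw [Wl_cons, Wl_cons]
  have : jsgn K x (insert x s) = 0 := by simp [jsgn]
  rw [this, zero_smul, smul_zero]

lemma Wl_dup23 (f : Finset (Fin n) → B n) (a x : Fin n) (v : List (Fin n)) (s : Finset (Fin n)) :
    Wl K f (a :: x :: x :: v) s = 0 := by
  rw [Wl_cons, Wl_dup12, smul_zero]

lemma Wl_dup13 (f : Finset (Fin n) → B n) (x a : Fin n) (v : List (Fin n)) (s : Finset (Fin n)) :
    Wl K f (x :: a :: x :: v) s = 0 := by
  rw [Wl_swap23, Wl_dup12, neg_zero]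

lemma Wl_dup24 (f : Finset (Fin n) → B n) (c x a : Fin n) (v : List (Fin n)) (s : Finset (Fin n)) :
    Wl K f (c :: x :: a :: x :: v) s = 0 := by
  rw [Wl_cons, Wl_dup13, smul_zero]

lemma Wst_append (l : List (Fin n)) (i : Fin n) (s : Finset (Fin n)) :
    Wst (l ++ [i]) s = insert i (Wst l s) := by
  induction l generalizing s with
  | nil => rfl
  | cons a t ih => simp [Wst, ih]

lemma Wsig_append (l : List (Fin n)) (i : Fin n) (s : Finset (Fin n)) :
    Wsig K (l ++ [i]) s = Wsig K l s * jsgn K i (Wst l s) := by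
  induction l generalizing s with
  | nil => simp [Wsig, Wst]
  | cons a t ih => simp [Wsig, Wst, ih, mul_assoc]

/-- The main composition lemma: applying a linear map that acts on the relevant single
like a single-letter insertion. -/
lemma map_Wl (g : M K n →ₗ[K] M K n) (f f' : Finset (Fin n) → B n) (i : Fin n)
    (hg : ∀ u : Finset (Fin n), g (Finsupp.single (f u) 1) = Wl K f' [i] u)
    (l : List (Fin n)) (s : Finset (Fin n)) :
    g (Wl K f l s) = Wl K f' (l ++ [i]) s := by
  unfold Wl
  rw [map_smul, hg]
  unfold Wl
  rw [Wsig_append, Wst_append, smul_smul]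
  congr 1
  simp [Wsig, Wst]


open Finsupp

set_option maxHeartbeats 1000000

/-- Action of the generator `l_i` on basis elements (prepending the letter `l_i`). -/
def Ltab (i : Fin n) : B n → M K n
  | .emp => Finsupp.single (.l1 i) 1
  | .l1 j => Wl K .rw [j, i] ∅
  | .r1 j => Finsupp.single (.l2 i j) 1
  | .l2 j k => Wl K .rw [k, j, i] ∅
  | .lw s => Wl K .rw [i] s
  | .rw s => Wl K .lw [i] s

/-- Action of the generator `r_i` on basis elements (prepending the letter `r_i`). -/
def Rtab (i : Fin n) : B n → M K n
  | .emp => Finsupp.single (.r1 i) 1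
  | .l1 j => Finsupp.single (.l2 j i) 1 + Wl K .rw [i, j] ∅
  | .r1 j => Wl K .rw [j, i] ∅
  | .l2 j k => Wl K .lw [k, i, j] ∅ + Wl K .rw [k, i, j] ∅
  | .lw s => -(Wl K .lw [i] s + Wl K .rw [i] s)
  | .rw s => Wl K .rw [i] s

@[simp] lemma Ltab_emp (i : Fin n) : Ltab K i (.emp) = Finsupp.single (.l1 i) 1 := rfl
@[simp] lemma Ltab_l1 (i j : Fin n) : Ltab K i (.l1 j) = Wl K .rw [j, i] ∅ := rfl
@[simp] lemma Ltab_r1 (i j : Fin n) : Ltab K i (.r1 j) = Finsupp.single (.l2 i j) 1 := rfl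
@[simp] lemma Ltab_l2 (i j k : Fin n) : Ltab K i (.l2 j k) = Wl K .rw [k, j, i] ∅ := rfl
@[simp] lemma Ltab_lw (i : Fin n) (s : Finset (Fin n)) : Ltab K i (.lw s) = Wl K .rw [i] s := rfl
@[simp] lemma Ltab_rw (i : Fin n) (s : Finset (Fin n)) : Ltab K i (.rw s) = Wl K .lw [i] s := rfl
@[simp] lemma Rtab_emp (i : Fin n) : Rtab K i (.emp) = Finsupp.single (.r1 i) 1 := rfl
@[simp] lemma Rtab_l1 (i j : Fin n) :
    Rtab K i (.l1 j) = Finsupp.single (.l2 j i) 1 + Wl K .rw [i, j] ∅ := rfl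
@[simp] lemma Rtab_r1 (i j : Fin n) : Rtab K i (.r1 j) = Wl K .rw [j, i] ∅ := rfl
@[simp] lemma Rtab_l2 (i j k : Fin n) :
    Rtab K i (.l2 j k) = Wl K .lw [k, i, j] ∅ + Wl K .rw [k, i, j] ∅ := rfl
@[simp] lemma Rtab_lw (i : Fin n) (s : Finset (Fin n)) :
    Rtab K i (.lw s) = -(Wl K .lw [i] s + Wl K .rw [i] s) := rfl
@[simp] lemma Rtab_rw (i : Fin n) (s : Finset (Fin n)) : Rtab K i (.rw s) = Wl K .rw [i] s := rfl

def Lg (i : Fin n) : M K n →ₗ[K] M K n := Finsupp.lift (M K n) K (B n) (Ltab K i)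
def Rg (i : Fin n) : M K n →ₗ[K] M K n := Finsupp.lift (M K n) K (B n) (Rtab K i)

@[simp] lemma Lg_single (i : Fin n) (b : B n) (c : K) :
    Lg K i (Finsupp.single b c) = c • Ltab K i b := by
  simp [Lg, Finsupp.lift_apply, Finsupp.sum_single_index]

@[simp] lemma Rg_single (i : Fin n) (b : B n) (c : K) :
    Rg K i (Finsupp.single b c) = c • Rtab K i b := by
  simp [Rg, Finsupp.lift_apply, Finsupp.sum_single_index]

lemma Lg_Wl_rw (i : Fin n) (l : List (Fin n)) (s : Finset (Fin n)) :
    Lg K i (Wl K .rw l s) = Wl K .lw (l ++ [i]) s := by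
  apply map_Wl
  intro u
  rw [Lg_single, one_smul, Ltab_rw]

lemma Lg_Wl_lw (i : Fin n) (l : List (Fin n)) (s : Finset (Fin n)) :
    Lg K i (Wl K .lw l s) = Wl K .rw (l ++ [i]) s := by
  apply map_Wl
  intro u
  rw [Lg_single, one_smul, Ltab_lw]

lemma Rg_Wl_rw (i : Fin n) (l : List (Fin n)) (s : Finset (Fin n)) :
    Rg K i (Wl K .rw l s) = Wl K .rw (l ++ [i]) s := by
  apply map_Wl
  intro u
  rw [Rg_single, one_smul, Rtab_rw]

lemma Rg_Wl_lw (i : Fin n) (l : List (Fin n)) (s : Finset (Fin n)) :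
    Rg K i (Wl K .lw l s) = -(Wl K .lw (l ++ [i]) s + Wl K .rw (l ++ [i]) s) := by
  show Rg K i (Wsig K l s • Finsupp.single (B.lw (Wst l s)) 1) = _
  rw [map_smul, Rg_single, one_smul, Rtab_lw]
  unfold Wl
  rw [Wsig_append, Wst_append]
  have h1 : Wsig K [i] (Wst l s) = jsgn K i (Wst l s) * 1 := rfl
  have h2 : Wst [i] (Wst l s) = insert i (Wst l s) := rfl
  rw [h1, h2]
  rw [smul_neg, smul_add, smul_smul, smul_smul]
  module

/-- Relation (I): `L_j ∘ L_i + R_i ∘ R_j = 0` (i.e. `l_j l_i + r_i r_j = 0`). -/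
lemma opI (i j : Fin n) : (Lg K j).comp (Lg K i) + (Rg K i).comp (Rg K j) = 0 := by
  apply Finsupp.lhom_ext
  intro b c
  simp only [LinearMap.add_apply, LinearMap.comp_apply, LinearMap.zero_apply]
  have key : ∀ b : B n, Lg K j (Ltab K i b) + Rg K i (Rtab K j b) = 0 := by
    intro b
    cases b with
    | emp =>
      simp only [Ltab_emp, Rtab_emp, Lg_single, Rg_single, one_smul, Ltab_l1, Rtab_r1]
      rw [Wl_swap12 K B.rw i j [] ∅]; abel
    | l1 k =>
      simp only [Ltab_l1, Rtab_l1, map_add, Rg_single, one_smul, Rtab_l2, Lg_Wl_rw, Rg_Wl_rw,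
        List.cons_append, List.nil_append]
      rw [Wl_swap13 K B.lw k i j [] ∅, Wl_swap23 K B.rw j i k [] ∅]; abel
    | r1 k =>
      simp only [Ltab_r1, Rtab_r1, Lg_single, one_smul, Ltab_l2, Rg_Wl_rw,
        List.cons_append, List.nil_append]
      rw [Wl_swap23 K B.rw k i j [] ∅]; abel
    | l2 k m =>
      simp only [Ltab_l2, Rtab_l2, map_add, Lg_Wl_rw, Rg_Wl_lw, Rg_Wl_rw,
        List.cons_append, List.nil_append]
      have h : Wl K B.lw [m, k, i, j] ∅ = Wl K B.lw [m, j, k, i] ∅ := by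
        rw [Wl_swap34 K B.lw m k i j [] ∅, Wl_swap23 K B.lw m k j [i] ∅, neg_neg]
      rw [h]; abel
    | lw t =>
      simp only [Ltab_lw, Rtab_lw, map_neg, map_add, Lg_Wl_rw, Rg_Wl_lw, Rg_Wl_rw,
        List.cons_append, List.nil_append]
      rw [Wl_swap12 K B.lw i j [] t]; abel
    | rw t =>
      simp only [Ltab_rw, Rtab_rw, Lg_Wl_lw, Rg_Wl_rw, List.cons_append, List.nil_append]
      rw [Wl_swap12 K B.rw i j [] t]; abel
  calc (Lg K j) ((Lg K i) (single b c)) + (Rg K i) ((Rg K j) (single b c))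
      = c • (Lg K j (Ltab K i b) + Rg K i (Rtab K j b)) := by
        rw [Lg_single, Rg_single, map_smul, map_smul, smul_add]
    _ = 0 := by rw [key, smul_zero]


lemma lhom_ext1 {f g : M K n →ₗ[K] M K n}
    (h : ∀ b, f (Finsupp.single b 1) = g (Finsupp.single b 1)) : f = g := by
  apply Finsupp.lhom_ext
  intro b c
  have hb : (Finsupp.single b c : M K n) = c • Finsupp.single b 1 := by
    rw [Finsupp.smul_single, smul_eq_mul, mul_one]
  rw [hb, map_smul, map_smul, h]

/-- Relation (II): `R_j ∘ L_i = L_i ∘ R_j + R_i ∘ R_j` (i.e. `r_j l_i = l_i r_j + r_i r_j`). -/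
lemma opII (i j : Fin n) :
    (Rg K j).comp (Lg K i) = (Lg K i).comp (Rg K j) + (Rg K i).comp (Rg K j) := by
  apply lhom_ext1
  intro b
  simp only [LinearMap.comp_apply, LinearMap.add_apply, Lg_single, Rg_single, one_smul]
  cases b with
  | emp =>
    simp only [Ltab_emp, Rtab_emp, Rg_single, Lg_single, one_smul, Rtab_l1, Ltab_r1, Rtab_r1]
  | l1 k =>
    simp only [Ltab_l1, Rtab_l1, map_add, Lg_single, Rg_single, one_smul, Ltab_l2, Rtab_l2,
      Lg_Wl_rw, Rg_Wl_rw, List.cons_append, List.nil_append]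
    have h : Wl K B.rw [k, i, j] ∅ = Wl K B.rw [j, k, i] ∅ := by
      rw [Wl_swap13 K B.rw k i j [] ∅, Wl_swap23 K B.rw j i k [] ∅, neg_neg]
    rw [h, Wl_swap23 K B.rw j i k [] ∅, Wl_swap23 K B.lw j i k [] ∅]
    abel
  | r1 k =>
    simp only [Ltab_r1, Rtab_r1, Rg_single, one_smul, Rtab_l2, Lg_Wl_rw, Rg_Wl_rw,
      List.cons_append, List.nil_append]
  | l2 k m =>
    simp only [Ltab_l2, Rtab_l2, map_add, Lg_Wl_rw, Lg_Wl_lw, Rg_Wl_rw, Rg_Wl_lw,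
      List.cons_append, List.nil_append]
    have h : Wl K B.rw [m, k, i, j] ∅ = Wl K B.rw [m, j, k, i] ∅ := by
      rw [Wl_swap34 K B.rw m k i j [] ∅, Wl_swap23 K B.rw m k j [i] ∅, neg_neg]
    rw [h]
    abel
  | lw t =>
    simp only [Ltab_lw, Rtab_lw, map_neg, map_add, Lg_Wl_rw, Lg_Wl_lw, Rg_Wl_rw, Rg_Wl_lw,
      List.cons_append, List.nil_append]
    rw [Wl_swap12 K B.rw i j [] t]
    abel
  | rw t =>
    simp only [Ltab_rw, Rtab_rw, map_add, Lg_Wl_rw, Lg_Wl_lw, Rg_Wl_rw, Rg_Wl_lw,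
      List.cons_append, List.nil_append]
    rw [Wl_swap12 K B.rw i j [] t, Wl_swap12 K B.lw i j [] t]
    abel

/-- Relation (III): `R_i ∘ R_j + R_j ∘ R_i = 0`. -/
lemma opIII (i j : Fin n) : (Rg K i).comp (Rg K j) + (Rg K j).comp (Rg K i) = 0 := by
  apply lhom_ext1
  intro b
  simp only [LinearMap.comp_apply, LinearMap.add_apply, LinearMap.zero_apply,
    Rg_single, one_smul]
  cases b with
  | emp =>
    simp only [Rtab_emp, Rg_single, one_smul, Rtab_r1]
    rw [Wl_swap12 K B.rw i j [] ∅]; abel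
  | l1 k =>
    simp only [Rtab_l1, map_add, Rg_single, one_smul, Rtab_l2, Rg_Wl_rw,
      List.cons_append, List.nil_append]
    rw [Wl_swap12 K B.lw j i [k] ∅, Wl_swap12 K B.rw j i [k] ∅, Wl_swap13 K B.rw j k i [] ∅]
    abel
  | r1 k =>
    simp only [Rtab_r1, Rg_Wl_rw, List.cons_append, List.nil_append]
    rw [Wl_swap23 K B.rw k i j [] ∅]; abel
  | l2 k m =>
    simp only [Rtab_l2, map_add, Rg_Wl_rw, Rg_Wl_lw, List.cons_append, List.nil_append]
    rw [Wl_swap24 K B.lw m j k i [] ∅]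
    abel
  | lw t =>
    simp only [Rtab_lw, map_neg, map_add, Rg_Wl_rw, Rg_Wl_lw, List.cons_append, List.nil_append]
    rw [Wl_swap12 K B.lw i j [] t]
    abel
  | rw t =>
    simp only [Rtab_rw, Rg_Wl_rw, List.cons_append, List.nil_append]
    rw [Wl_swap12 K B.rw i j [] t]; abel

/-- Relation (III diagonal): `R_i ∘ R_i = 0`. -/
lemma opIIId (i : Fin n) : (Rg K i).comp (Rg K i) = 0 := by
  apply lhom_ext1
  intro b
  simp only [LinearMap.comp_apply, LinearMap.zero_apply, Rg_single, one_smul]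
  cases b with
  | emp =>
    simp only [Rtab_emp, Rg_single, one_smul, Rtab_r1]
    rw [Wl_dup12]
  | l1 k =>
    simp only [Rtab_l1, map_add, Rg_single, one_smul, Rtab_l2, Rg_Wl_rw,
      List.cons_append, List.nil_append]
    rw [Wl_dup12 K B.lw i [k] ∅, Wl_dup12 K B.rw i [k] ∅, Wl_dup13 K B.rw i k [] ∅]
    abel
  | r1 k =>
    simp only [Rtab_r1, Rg_Wl_rw, List.cons_append, List.nil_append]
    rw [Wl_dup23 K B.rw k i [] ∅]
  | l2 k m =>
    simp only [Rtab_l2, map_add, Rg_Wl_rw, Rg_Wl_lw, List.cons_append, List.nil_append]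
    rw [Wl_dup24 K B.lw m i k [] ∅, Wl_dup24 K B.rw m i k [] ∅]
    abel
  | lw t =>
    simp only [Rtab_lw, map_neg, map_add, Rg_Wl_rw, Rg_Wl_lw, List.cons_append, List.nil_append]
    rw [Wl_dup12 K B.lw i [] t, Wl_dup12 K B.rw i [] t]
    abel
  | rw t =>
    simp only [Rtab_rw, Rg_Wl_rw, List.cons_append, List.nil_append]
    rw [Wl_dup12 K B.rw i [] t]


/-- The sum-of-generators operators. -/
def Ls (a : Fin n → K) : Module.End K (M K n) := ∑ i, a i • (Lg K i : Module.End K (M K n))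
def Rs (a : Fin n → K) : Module.End K (M K n) := ∑ i, a i • (Rg K i : Module.End K (M K n))

lemma sum_smul_mul (F G : Fin n → Module.End K (M K n)) (a b : Fin n → K) :
    (∑ i, a i • F i) * (∑ j, b j • G j) = ∑ i, ∑ j, (a i * b j) • (F i * G j) := by
  rw [Finset.sum_mul]
  refine Finset.sum_congr rfl fun i _ => ?_
  rw [Finset.mul_sum]
  refine Finset.sum_congr rfl fun j _ => ?_
  rw [smul_mul_assoc, mul_smul_comm, smul_smul]

lemma mulLL (a b : Fin n → K) : Ls K b * Ls K a + Rs K a * Rs K b = 0 := by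
  unfold Ls Rs
  rw [sum_smul_mul, sum_smul_mul, Finset.sum_comm, ← Finset.sum_add_distrib]
  refine Finset.sum_eq_zero fun i _ => ?_
  rw [← Finset.sum_add_distrib]
  refine Finset.sum_eq_zero fun j _ => ?_
  have : (b j * a i) • ((Lg K j : Module.End K (M K n)) * Lg K i)
      + (a i * b j) • ((Rg K i : Module.End K (M K n)) * Rg K j)
      = (a i * b j) • (((Lg K j).comp (Lg K i) : Module.End K (M K n))
        + ((Rg K i).comp (Rg K j) : Module.End K (M K n))) := by
    rw [smul_add, mul_comm (b j) (a i)]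
    rfl
  rw [this, opI, smul_zero]

lemma rrSq (a : Fin n → K) : Rs K a * Rs K a = 0 := by
  unfold Rs
  rw [sum_smul_mul, ← Finset.sum_product']
  apply Finset.sum_ninvolution Prod.swap
  · intro p
    have : (a p.1 * a p.2) • ((Rg K p.1 : Module.End K (M K n)) * Rg K p.2)
        + (a p.2 * a p.1) • ((Rg K p.2 : Module.End K (M K n)) * Rg K p.1)
        = (a p.1 * a p.2) • (((Rg K p.1).comp (Rg K p.2) : Module.End K (M K n))
          + ((Rg K p.2).comp (Rg K p.1) : Module.End K (M K n))) := by
      rw [smul_add, mul_comm (a p.2) (a p.1)]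
      rfl
    rw [Prod.fst_swap, Prod.snd_swap, this, opIII, smul_zero]
  · intro p hp
    intro hswap
    apply hp
    have h12 : p.2 = p.1 := congrArg Prod.fst hswap
    have : ((Rg K p.1 : Module.End K (M K n)) * Rg K p.2) = 0 := by
      rw [← h12]
      show ((Rg K p.2).comp (Rg K p.2) : Module.End K (M K n)) = 0
      exact opIIId K p.2
    rw [this, smul_zero]
  · intro p; simp
  · intro p; simp

lemma llSq (a : Fin n → K) : Ls K a * Ls K a = 0 := by
  have h := mulLL K a a
  rw [rrSq K a, add_zero] at h
  exact h

lemma mulRL (a b : Fin n → K) : Rs K b * Ls K a = Ls K a * Rs K b + Rs K a * Rs K b := by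
  unfold Ls Rs
  rw [sum_smul_mul, sum_smul_mul, sum_smul_mul, Finset.sum_comm, ← Finset.sum_add_distrib]
  refine Finset.sum_congr rfl fun i _ => ?_
  rw [← Finset.sum_add_distrib]
  refine Finset.sum_congr rfl fun j _ => ?_
  rw [mul_comm (b j) (a i), ← smul_add]
  congr 1
  show ((Rg K j).comp (Lg K i) : Module.End K (M K n)) = (Lg K i).comp (Rg K j) + (Rg K i).comp (Rg K j)
  exact opII K i j

/-! ### The representation of `U(K^n)` on the model module -/

def genMap : ((Fin n → K) × (Fin n → K)) →ₗ[K] Module.End K (M K n) where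
  toFun p := Ls K p.1 + Rs K p.2
  map_add' p q := by
    show Ls K (p.1 + q.1) + Rs K (p.2 + q.2) = Ls K p.1 + Rs K p.2 + (Ls K q.1 + Rs K q.2)
    simp only [Ls, Rs, Pi.add_apply, add_smul, Finset.sum_add_distrib]
    abel
  map_smul' c p := by
    show Ls K (c • p.1) + Rs K (c • p.2) = c • (Ls K p.1 + Rs K p.2)
    simp only [Ls, Rs, Pi.smul_apply, smul_eq_mul, mul_smul, ← Finset.smul_sum, smul_add]

def phiT : TensorAlgebra K ((Fin n → K) × (Fin n → K)) →ₐ[K] Module.End K (M K n) :=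
  TensorAlgebra.lift K (genMap K)

lemma Rs_zero : Rs K (0 : Fin n → K) = 0 := by
  simp [Rs]

lemma Ls_zero : Ls K (0 : Fin n → K) = 0 := by
  simp [Ls]

lemma phiT_lT (a : Fin n → K) : phiT K (lT K n a) = Ls K a := by
  unfold phiT lT
  rw [TensorAlgebra.lift_ι_apply]
  show Ls K a + Rs K 0 = Ls K a
  rw [Rs_zero, add_zero]

lemma phiT_rT (a : Fin n → K) : phiT K (rT K n a) = Rs K a := by
  unfold phiT rT
  rw [TensorAlgebra.lift_ι_apply]
  show Ls K 0 + Rs K a = Rs K a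
  rw [Ls_zero, zero_add]

lemma relLift {x y : TensorAlgebra K ((Fin n → K) × (Fin n → K))} (h : URel K n x y) :
    phiT K x = phiT K y := by
  cases h with
  | ll a => rw [map_mul, map_zero, phiT_lT, llSq]
  | rr a => rw [map_mul, map_zero, phiT_rT, rrSq]
  | llrr a b => rw [map_add, map_mul, map_mul, map_zero, phiT_lT, phiT_lT, phiT_rT, phiT_rT, mulLL]
  | rl a b =>
    rw [map_sub, map_sub, map_mul, map_mul, map_mul, map_zero,
      phiT_lT, phiT_rT, phiT_rT, mulRL]
    abel

def phi : Ualg K n →ₐ[K] Module.End K (M K n) :=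
  RingQuot.liftAlgHom K ⟨phiT K, fun _ _ h => relLift K h⟩

lemma phi_lU (a : Fin n → K) : phi K (lU K n a) = Ls K a := by
  unfold phi lU
  exact (RingQuot.liftAlgHom_mkAlgHom_apply (S := K) (phiT K) (fun _ _ h => relLift K h)
    (lT K n a)).trans (phiT_lT K a)

lemma phi_rU (a : Fin n → K) : phi K (rU K n a) = Rs K a := by
  unfold phi rU
  exact (RingQuot.liftAlgHom_mkAlgHom_apply (S := K) (phiT K) (fun _ _ h => relLift K h)
    (rT K n a)).trans (phiT_rT K a)

/-- delta generators -/
def lUd (n : ℕ) (i : Fin n) : Ualg K n := lU K n (Pi.single i 1)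
def rUd (n : ℕ) (i : Fin n) : Ualg K n := rU K n (Pi.single i 1)

lemma Ls_single (i : Fin n) : Ls K (Pi.single i (1 : K)) = (Lg K i : Module.End K (M K n)) := by
  unfold Ls
  rw [Finset.sum_eq_single i]
  · rw [Pi.single_eq_same, one_smul]
  · intro j _ hj
    rw [Pi.single_eq_of_ne hj, zero_smul]
  · intro h; exact absurd (Finset.mem_univ i) h

lemma Rs_single (i : Fin n) : Rs K (Pi.single i (1 : K)) = (Rg K i : Module.End K (M K n)) := by
  unfold Rs
  rw [Finset.sum_eq_single i]
  · rw [Pi.single_eq_same, one_smul]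
  · intro j _ hj
    rw [Pi.single_eq_of_ne hj, zero_smul]
  · intro h; exact absurd (Finset.mem_univ i) h

lemma phi_lUd (i : Fin n) : phi K (lUd K n i) = (Lg K i : Module.End K (M K n)) := by
  rw [lUd, phi_lU, Ls_single]

lemma phi_rUd (i : Fin n) : phi K (rUd K n i) = (Rg K i : Module.End K (M K n)) := by
  rw [rUd, phi_rU, Rs_single]

/-! ### Relations in `U(K^n)` -/

lemma e_ll (a : Fin n → K) : lU K n a * lU K n a = 0 := by
  have h := RingQuot.mkAlgHom_rel K (URel.ll a)
  rw [map_mul, map_zero] at h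
  exact h

lemma e_rr (a : Fin n → K) : rU K n a * rU K n a = 0 := by
  have h := RingQuot.mkAlgHom_rel K (URel.rr a)
  rw [map_mul, map_zero] at h
  exact h

lemma e_lr (a b : Fin n → K) : lU K n b * lU K n a + rU K n a * rU K n b = 0 := by
  have h := RingQuot.mkAlgHom_rel K (URel.llrr a b)
  rw [map_add, map_mul, map_mul, map_zero] at h
  exact h

lemma e_rl (a b : Fin n → K) :
    rU K n b * lU K n a = lU K n a * rU K n b + rU K n a * rU K n b := by
  have h := RingQuot.mkAlgHom_rel K (URel.rl a b)
  rw [map_sub, map_sub, map_mul, map_mul, map_mul, map_zero, sub_sub, sub_eq_zero] at h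
  exact h

lemma lU_add (a b : Fin n → K) : lU K n (a + b) = lU K n a + lU K n b := by
  unfold lU lT
  rw [show ((a + b, 0) : (Fin n → K) × (Fin n → K)) = (a, 0) + (b, 0) by
    simp [Prod.ext_iff], map_add, map_add]
  rfl

lemma rU_add (a b : Fin n → K) : rU K n (a + b) = rU K n a + rU K n b := by
  unfold rU rT
  rw [show ((0, a + b) : (Fin n → K) × (Fin n → K)) = (0, a) + (0, b) by
    simp [Prod.ext_iff], map_add, map_add]
  rfl

lemma anti_r (a b : Fin n → K) : rU K n a * rU K n b + rU K n b * rU K n a = 0 := by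
  have h := e_rr K (a + b)
  rw [rU_add, add_mul, mul_add, mul_add, e_rr, e_rr] at h
  rw [← h]
  abel

lemma anti_l (a b : Fin n → K) : lU K n a * lU K n b + lU K n b * lU K n a = 0 := by
  have h := e_ll K (a + b)
  rw [lU_add, add_mul, mul_add, mul_add, e_ll, e_ll] at h
  rw [← h]
  abel

lemma ll_eq_rr (a b : Fin n → K) : lU K n a * lU K n b = rU K n a * rU K n b := by
  have h1 : lU K n a * lU K n b = -(rU K n b * rU K n a) :=
    eq_neg_of_add_eq_zero_left (e_lr K b a)
  have h2 : rU K n b * rU K n a = -(rU K n a * rU K n b) :=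
    eq_neg_of_add_eq_zero_left (anti_r K b a)
  rw [h1, h2, neg_neg]

lemma e5 (a b : Fin n → K) : lU K n a * (rU K n a * rU K n b) = 0 := by
  have h1 : rU K n a * rU K n b = -(lU K n b * lU K n a) :=
    eq_neg_of_add_eq_zero_right (e_lr K a b)
  rw [h1, mul_neg, ← mul_assoc]
  have h2 : lU K n a * lU K n b = -(lU K n b * lU K n a) :=
    eq_neg_of_add_eq_zero_left (anti_l K a b)
  rw [h2, neg_mul, neg_neg, mul_assoc, e_ll, mul_zero]

lemma e6 (a b c : Fin n → K) :
    lU K n a * (rU K n b * rU K n c) = lU K n b * (rU K n c * rU K n a) := by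
  calc lU K n a * (rU K n b * rU K n c)
      = lU K n a * (-(lU K n c * lU K n b)) := by
        rw [eq_neg_of_add_eq_zero_right (e_lr K b c)]
    _ = -((lU K n a * lU K n c) * lU K n b) := by rw [mul_neg, mul_assoc]
    _ = -((-(rU K n c * rU K n a)) * lU K n b) := by
        rw [eq_neg_of_add_eq_zero_left (e_lr K c a)]
    _ = rU K n c * (rU K n a * lU K n b) := by rw [neg_mul, neg_neg, mul_assoc]
    _ = rU K n c * (lU K n b * rU K n a + rU K n b * rU K n a) := by rw [e_rl K b a]
    _ = (rU K n c * lU K n b) * rU K n a + (rU K n c * rU K n b) * rU K n a := by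
        rw [mul_add, mul_assoc, mul_assoc]
    _ = (lU K n b * rU K n c + rU K n b * rU K n c) * rU K n a
        + (rU K n c * rU K n b) * rU K n a := by rw [e_rl K b c]
    _ = lU K n b * (rU K n c * rU K n a)
        + (rU K n b * rU K n c + rU K n c * rU K n b) * rU K n a := by
        rw [add_mul, add_mul, mul_assoc]
        abel
    _ = lU K n b * (rU K n c * rU K n a) := by rw [anti_r, zero_mul, add_zero]

/-! ### Words in `U(K^n)` and the spanning argument -/

def rlist (l : List (Fin n)) : Ualg K n := (l.map (rUd K n)).prod

def lword : List (Fin n) → Ualg K n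
  | [] => 1
  | h :: t => lUd K n h * rlist K t

@[simp] lemma rlist_nil : rlist K ([] : List (Fin n)) = 1 := rfl

@[simp] lemma rlist_cons (i : Fin n) (l : List (Fin n)) :
    rlist K (i :: l) = rUd K n i * rlist K l := by
  simp [rlist]

@[simp] lemma rlist_singleton (i : Fin n) : rlist K [i] = rUd K n i := by simp

lemma anti_r_d (i j : Fin n) :
    rUd K n i * rUd K n j = -(rUd K n j * rUd K n i) :=
  eq_neg_of_add_eq_zero_left (anti_r K _ _)

lemma rr_d (i : Fin n) : rUd K n i * rUd K n i = 0 := e_rr K _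

/-- Insertion of a letter into a sorted `r`-word. -/
lemma rcons (i : Fin n) : ∀ (l : List (Fin n)), l.Pairwise (· < ·) →
    ∃ c : K, rUd K n i * rlist K l = c • rlist K (l.orderedInsert (· ≤ ·) i)
      ∧ (i ∈ l → c = 0) := by
  intro l
  induction l with
  | nil =>
    intro _
    exact ⟨1, by simp [List.orderedInsert], by simp⟩
  | cons h t ih =>
    intro hs
    rcases lt_trichotomy i h with hlt | heq | hgt
    · refine ⟨1, ?_, ?_⟩
      · rw [List.orderedInsert, if_pos (le_of_lt hlt), one_smul]
        simp [rlist_cons]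
      · intro hmem
        exfalso
        rcases List.mem_cons.mp hmem with h1 | h1
        · exact absurd h1 (ne_of_lt hlt)
        · exact absurd (List.rel_of_pairwise_cons hs h1) (by omega)
    · subst heq
      refine ⟨0, ?_, fun _ => rfl⟩
      rw [zero_smul, rlist_cons, ← mul_assoc, rr_d, zero_mul]
    · have hne : ¬ i ≤ h := not_le.2 hgt
      obtain ⟨c, hc, hc0⟩ := ih hs.of_cons
      refine ⟨-c, ?_, ?_⟩
      · rw [List.orderedInsert, if_neg hne, rlist_cons, rlist_cons,
          ← mul_assoc, anti_r_d, neg_mul, mul_assoc, hc, mul_smul_comm, neg_smul]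
      · intro hmem
        rcases List.mem_cons.mp hmem with h1 | h1
        · exact absurd h1 (ne_of_gt hgt)
        · rw [hc0 h1, neg_zero]

lemma oI_perm (i : Fin n) (l : List (Fin n)) :
    List.Perm (l.orderedInsert (· ≤ ·) i) (i :: l) := List.perm_orderedInsert _ _ _

lemma oI_sorted {i : Fin n} {l : List (Fin n)} (hs : l.Pairwise (· < ·)) (hmem : i ∉ l) :
    (l.orderedInsert (· ≤ ·) i).Pairwise (· < ·) := by
  have h1 : (l.orderedInsert (· ≤ ·) i).Pairwise (· ≤ ·) :=
    List.Pairwise.orderedInsert i l (hs.imp le_of_lt)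
  have h2 : (l.orderedInsert (· ≤ ·) i).Nodup :=
    ((oI_perm i l).nodup_iff).mpr (List.nodup_cons.mpr ⟨hmem, hs.nodup⟩)
  exact (h1.sortedLE.sortedLT_of_nodup h2).pairwise

lemma oI_toFinset (i : Fin n) (l : List (Fin n)) :
    (l.orderedInsert (· ≤ ·) i).toFinset = insert i l.toFinset := by
  rw [List.toFinset_eq_of_perm _ _ (oI_perm i l), List.toFinset_cons]

lemma oI_length (i : Fin n) (l : List (Fin n)) :
    (l.orderedInsert (· ≤ ·) i).length = l.length + 1 := List.orderedInsert_length _ _ _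

/-! ### weights and good basis elements -/

def wtB : B n → ℕ
  | .emp => 0
  | .l1 _ => 1
  | .r1 _ => 1
  | .l2 _ _ => 2
  | .lw s => s.card
  | .rw s => s.card

def goodB : B n → Prop
  | .lw s => 3 ≤ s.card
  | .rw s => 2 ≤ s.card
  | _ => True

instance : DecidablePred (goodB (n := n)) := fun b => by
  cases b <;> simp only [goodB] <;> infer_instance

def mono : B n → Ualg K n
  | .emp => 1
  | .l1 i => lUd K n i
  | .r1 i => rUd K n i
  | .l2 i j => lUd K n i * rUd K n j
  | .lw s => lword K (s.sort (· ≤ ·))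
  | .rw s => rlist K (s.sort (· ≤ ·))

def P (k : ℕ) : Submodule K (Ualg K n) :=
  Submodule.span K (mono K '' {b : B n | wtB b = k ∧ goodB b})

lemma mono_mem_P {b : B n} {k : ℕ} (h1 : wtB b = k) (h2 : goodB b) : mono K b ∈ P K k :=
  Submodule.subset_span ⟨b, ⟨h1, h2⟩, rfl⟩

/-- any sorted `r`-word is a canonical monomial. -/
lemma sp_rlist : ∀ (l : List (Fin n)), l.Pairwise (· < ·) → rlist K l ∈ P K l.length := by
  intro l hs
  match l with
  | [] => exact mono_mem_P K (b := B.emp) rfl trivial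
  | [x] =>
    have hx : rUd K n x ∈ P K 1 := mono_mem_P K (b := B.r1 x) rfl trivial
    simpa using hx
  | x :: y :: u =>
    have hnd : (x :: y :: u).Nodup := hs.nodup
    have hsort : (x :: y :: u).toFinset.sort (· ≤ ·) = x :: y :: u :=
      (List.toFinset_sort (· ≤ ·) hnd).mpr (hs.imp le_of_lt)
    have hcard : (x :: y :: u).toFinset.card = (x :: y :: u).length :=
      List.toFinset_card_of_nodup hnd
    have : rlist K (x :: y :: u) = mono K (B.rw (x :: y :: u).toFinset) := by
      show _ = rlist K ((x :: y :: u).toFinset.sort (· ≤ ·))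
      rw [hsort]
    rw [this]
    refine mono_mem_P K ?_ ?_
    · show (x :: y :: u).toFinset.card = (x :: y :: u).length
      exact hcard
    · show 2 ≤ (x :: y :: u).toFinset.card
      rw [hcard]; simp

lemma sp_lword : ∀ (l : List (Fin n)), l.Pairwise (· < ·) → 3 ≤ l.length →
    lword K l ∈ P K l.length := by
  intro l hs hlen
  have hnd : l.Nodup := hs.nodup
  have hsort : l.toFinset.sort (· ≤ ·) = l :=
    (List.toFinset_sort (· ≤ ·) hnd).mpr (hs.imp le_of_lt)
  have hcard : l.toFinset.card = l.length := List.toFinset_card_of_nodup hnd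
  have : lword K l = mono K (B.lw l.toFinset) := by
    show _ = lword K (l.toFinset.sort (· ≤ ·))
    rw [hsort]
  rw [this]
  refine mono_mem_P K ?_ ?_
  · show l.toFinset.card = l.length
    exact hcard
  · show 3 ≤ l.toFinset.card
    rw [hcard]; exact hlen

/-- `r_i ·` (sorted `r`-word) stays in the span. -/
lemma sp_rmul (i : Fin n) (l : List (Fin n)) (hs : l.Pairwise (· < ·)) :
    rUd K n i * rlist K l ∈ P K (l.length + 1) := by
  obtain ⟨c, hc, hc0⟩ := rcons K i l hs
  by_cases hmem : i ∈ l
  · rw [hc, hc0 hmem, zero_smul]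
    exact Submodule.zero_mem _
  · rw [hc]
    refine Submodule.smul_mem _ _ ?_
    have := sp_rlist K (l.orderedInsert (· ≤ ·) i) (oI_sorted hs hmem)
    rwa [oI_length] at this

lemma e5_d (i j : Fin n) : lUd K n i * (rUd K n i * rUd K n j) = 0 := e5 K _ _

lemma e6_d (a b c : Fin n) :
    lUd K n a * (rUd K n b * rUd K n c) = lUd K n b * (rUd K n c * rUd K n a) := e6 K _ _ _

lemma ll_eq_rr_d (i j : Fin n) : lUd K n i * lUd K n j = rUd K n i * rUd K n j :=
  ll_eq_rr K _ _

lemma e_rl_d (i j : Fin n) :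
    rUd K n j * lUd K n i = lUd K n i * rUd K n j + rUd K n i * rUd K n j := e_rl K _ _

/-- `l_i ·` (sorted `r`-word of length ≥ 2) stays in the span. -/
lemma sp_lmul_r (i : Fin n) (l : List (Fin n)) (hs : l.Pairwise (· < ·)) (hlen : 2 ≤ l.length) :
    lUd K n i * rlist K l ∈ P K (l.length + 1) := by
  obtain ⟨h, c, t, rfl⟩ : ∃ x y u, l = x :: y :: u := by
    rcases l with _ | ⟨x, _ | ⟨y, u⟩⟩
    · simp at hlen
    · simp at hlen
    · exact ⟨_, _, _, rfl⟩
  have hct : (c :: t).Pairwise (· < ·) := hs.of_cons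
  have ht : t.Pairwise (· < ·) := hct.of_cons
  rcases lt_trichotomy i h with hlt | heq | hgt
  · -- i < h : direct canonical `l`-word
    have heq : lUd K n i * rlist K (h :: c :: t) = lword K (i :: h :: c :: t) := rfl
    rw [heq]
    have hsort : (i :: h :: c :: t).Pairwise (· < ·) := by
      refine List.pairwise_cons.mpr ⟨?_, hs⟩
      intro b hb
      rcases List.mem_cons.mp hb with h1 | h1
      · omega
      · exact lt_trans hlt (List.rel_of_pairwise_cons hs h1)
    have hmem := sp_lword K (i :: h :: c :: t) hsort (by simp)
    simpa using hmem
  · -- i = h : zero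
    subst heq
    have heq2 : lUd K n i * rlist K (i :: c :: t)
        = (lUd K n i * (rUd K n i * rUd K n c)) * rlist K t := by
      rw [rlist_cons, rlist_cons, ← mul_assoc, ← mul_assoc, mul_assoc (lUd K n i)]
    rw [heq2, e5_d, zero_mul]
    exact Submodule.zero_mem _
  · -- h < i : use the cyclic relation
    have step : lUd K n i * rlist K (h :: c :: t)
        = lUd K n h * (rUd K n c * (rUd K n i * rlist K t)) := by
      rw [rlist_cons, rlist_cons, ← mul_assoc, ← mul_assoc, mul_assoc (lUd K n i),
        e6_d K i h c, ← mul_assoc, ← mul_assoc, mul_assoc (lUd K n h), mul_assoc,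
        mul_assoc]
      exact (mul_assoc _ _ _).symm
    rw [step]
    obtain ⟨c1, hc1, hc1z⟩ := rcons K i t ht
    by_cases hit : i ∈ t
    · rw [hc1, hc1z hit, zero_smul, mul_zero, mul_zero]
      exact Submodule.zero_mem _
    rw [hc1]
    have hoit : (t.orderedInsert (· ≤ ·) i).Pairwise (· < ·) := oI_sorted ht hit
    obtain ⟨c2, hc2, hc2z⟩ := rcons K c (t.orderedInsert (· ≤ ·) i) hoit
    by_cases hcit : c ∈ t.orderedInsert (· ≤ ·) i
    · rw [mul_smul_comm, hc2, hc2z hcit, zero_smul, smul_zero, mul_zero]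
      exact Submodule.zero_mem _
    rw [mul_smul_comm, hc2, smul_smul, mul_smul_comm]
    refine Submodule.smul_mem _ _ ?_
    set w := (t.orderedInsert (· ≤ ·) i).orderedInsert (· ≤ ·) c with hw
    have hws : w.Pairwise (· < ·) := oI_sorted hoit hcit
    have hhb : ∀ b ∈ w, h < b := by
      intro b hb
      rw [hw] at hb
      rcases (List.mem_orderedInsert _).mp hb with h1 | h1
      · subst h1; exact List.rel_of_pairwise_cons hs (by simp)
      rcases (List.mem_orderedInsert _).mp h1 with h2 | h2
      · subst h2; exact hgt
      · exact List.rel_of_pairwise_cons hs (by simp [h2])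
    have hsort : (h :: w).Pairwise (· < ·) := List.pairwise_cons.mpr ⟨hhb, hws⟩
    have h3 := sp_lword K (h :: w) hsort (by simp [hw, oI_length])
    simp only [List.length_cons, hw, oI_length] at h3 ⊢
    exact h3

lemma sp_rr (i j : Fin n) : rUd K n i * rUd K n j ∈ P K 2 := by
  have h := sp_rmul K i [j] (by simp)
  simpa using h

lemma sp_rrr (i j m : Fin n) : rUd K n i * (rUd K n j * rUd K n m) ∈ P K 3 := by
  rcases lt_trichotomy j m with hlt | heq | hgt
  · have h : rUd K n j * rUd K n m = rlist K [j, m] := by simp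
    rw [h]
    have := sp_rmul K i [j, m] (by simp [hlt])
    simpa using this
  · subst heq
    rw [rr_d, mul_zero]
    exact Submodule.zero_mem _
  · rw [anti_r_d, mul_neg]
    refine Submodule.neg_mem _ ?_
    have h : rUd K n m * rUd K n j = rlist K [m, j] := by simp
    rw [h]
    have := sp_rmul K i [m, j] (by simp [hgt])
    simpa using this

lemma sp_lrr (a i m : Fin n) : lUd K n a * (rUd K n i * rUd K n m) ∈ P K 3 := by
  rcases lt_trichotomy i m with hlt | heq | hgt
  · have h : rUd K n i * rUd K n m = rlist K [i, m] := by simp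
    rw [h]
    have := sp_lmul_r K a [i, m] (by simp [hlt]) (by simp)
    simpa using this
  · subst heq
    rw [rr_d, mul_zero]
    exact Submodule.zero_mem _
  · rw [anti_r_d, mul_neg]
    refine Submodule.neg_mem _ ?_
    have h : rUd K n m * rUd K n i = rlist K [m, i] := by simp
    rw [h]
    have := sp_lmul_r K a [m, i] (by simp [hgt]) (by simp)
    simpa using this

lemma sp_rmul_lword (i : Fin n) (l : List (Fin n)) (hs : l.Pairwise (· < ·))
    (hlen : 3 ≤ l.length) : rUd K n i * lword K l ∈ P K (l.length + 1) := by
  obtain ⟨h, t, rfl⟩ : ∃ x u, l = x :: u := by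
    rcases l with _ | ⟨x, u⟩
    · simp at hlen
    · exact ⟨_, _, rfl⟩
  have ht : t.Pairwise (· < ·) := hs.of_cons
  have step : rUd K n i * lword K (h :: t)
      = lUd K n h * (rUd K n i * rlist K t) + rUd K n h * (rUd K n i * rlist K t) := by
    show rUd K n i * (lUd K n h * rlist K t) = _
    rw [← mul_assoc, e_rl_d K h i, add_mul, mul_assoc, mul_assoc]
  rw [step]
  obtain ⟨c1, hc1, hc1z⟩ := rcons K i t ht
  by_cases hit : i ∈ t
  · rw [hc1, hc1z hit, zero_smul, mul_zero, mul_zero, add_zero]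
    exact Submodule.zero_mem _
  rw [hc1, mul_smul_comm, mul_smul_comm]
  have hsorted : (t.orderedInsert (· ≤ ·) i).Pairwise (· < ·) := oI_sorted ht hit
  refine Submodule.add_mem _ (Submodule.smul_mem _ _ ?_) (Submodule.smul_mem _ _ ?_)
  · have h2 := sp_lmul_r K h (t.orderedInsert (· ≤ ·) i) hsorted
      (by rw [oI_length]; simp only [List.length_cons] at hlen; omega)
    simpa [oI_length] using h2
  · have h2 := sp_rmul K h (t.orderedInsert (· ≤ ·) i) hsorted
    simpa [oI_length] using h2

lemma sp_lmul_lword (i : Fin n) (l : List (Fin n)) (hs : l.Pairwise (· < ·))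
    (hlen : 3 ≤ l.length) : lUd K n i * lword K l ∈ P K (l.length + 1) := by
  obtain ⟨h, t, rfl⟩ : ∃ x u, l = x :: u := by
    rcases l with _ | ⟨x, u⟩
    · simp at hlen
    · exact ⟨_, _, rfl⟩
  have step : lUd K n i * lword K (h :: t) = rUd K n i * rlist K (h :: t) := by
    show lUd K n i * (lUd K n h * rlist K t) = _
    rw [← mul_assoc, ll_eq_rr_d, rlist_cons, ← mul_assoc]
  rw [step]
  exact sp_rmul K i (h :: t) hs

lemma keyL (i : Fin n) (b : B n) (hg : goodB b) :
    lUd K n i * mono K b ∈ P K (wtB b + 1) := by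
  cases b with
  | emp =>
    show lUd K n i * 1 ∈ P K 1
    rw [mul_one]
    exact mono_mem_P K (b := B.l1 i) rfl trivial
  | l1 j =>
    show lUd K n i * lUd K n j ∈ P K 2
    rw [ll_eq_rr_d]
    exact sp_rr K i j
  | r1 j =>
    show lUd K n i * rUd K n j ∈ P K 2
    exact mono_mem_P K (b := B.l2 i j) rfl trivial
  | l2 j m =>
    show lUd K n i * (lUd K n j * rUd K n m) ∈ P K 3
    rw [← mul_assoc, ll_eq_rr_d, mul_assoc]
    exact sp_rrr K i j m
  | lw s =>
    show lUd K n i * lword K (s.sort (· ≤ ·)) ∈ P K (s.card + 1)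
    have h := sp_lmul_lword K i (s.sort (· ≤ ·)) ((Finset.sortedLT_sort s).pairwise)
      (by simpa [Finset.length_sort] using (show 3 ≤ s.card from hg))
    simpa [Finset.length_sort] using h
  | rw s =>
    show lUd K n i * rlist K (s.sort (· ≤ ·)) ∈ P K (s.card + 1)
    have h := sp_lmul_r K i (s.sort (· ≤ ·)) ((Finset.sortedLT_sort s).pairwise)
      (by simpa [Finset.length_sort] using (show 2 ≤ s.card from hg))
    simpa [Finset.length_sort] using h

lemma keyR (i : Fin n) (b : B n) (hg : goodB b) :
    rUd K n i * mono K b ∈ P K (wtB b + 1) := by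
  cases b with
  | emp =>
    show rUd K n i * 1 ∈ P K 1
    rw [mul_one]
    exact mono_mem_P K (b := B.r1 i) rfl trivial
  | l1 j =>
    show rUd K n i * lUd K n j ∈ P K 2
    rw [e_rl_d K j i]
    refine Submodule.add_mem _ ?_ (sp_rr K j i)
    exact mono_mem_P K (b := B.l2 j i) rfl trivial
  | r1 j =>
    show rUd K n i * rUd K n j ∈ P K 2
    exact sp_rr K i j
  | l2 j m =>
    show rUd K n i * (lUd K n j * rUd K n m) ∈ P K 3
    rw [← mul_assoc, e_rl_d K j i, add_mul, mul_assoc, mul_assoc]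
    exact Submodule.add_mem _ (sp_lrr K j i m) (sp_rrr K j i m)
  | lw s =>
    show rUd K n i * lword K (s.sort (· ≤ ·)) ∈ P K (s.card + 1)
    have h := sp_rmul_lword K i (s.sort (· ≤ ·)) ((Finset.sortedLT_sort s).pairwise)
      (by simpa [Finset.length_sort] using (show 3 ≤ s.card from hg))
    simpa [Finset.length_sort] using h
  | rw s =>
    show rUd K n i * rlist K (s.sort (· ≤ ·)) ∈ P K (s.card + 1)
    have h := sp_rmul K i (s.sort (· ≤ ·)) ((Finset.sortedLT_sort s).pairwise)
    simpa [Finset.length_sort] using h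

lemma lU_smul (c : K) (a : Fin n → K) : lU K n (c • a) = c • lU K n a := by
  unfold lU lT
  rw [show ((c • a, 0) : (Fin n → K) × (Fin n → K)) = c • (a, 0) by
    simp [Prod.ext_iff], map_smul, map_smul]
  rfl

lemma rU_smul (c : K) (a : Fin n → K) : rU K n (c • a) = c • rU K n a := by
  unfold rU rT
  rw [show ((0, c • a) : (Fin n → K) × (Fin n → K)) = c • (0, a) by
    simp [Prod.ext_iff], map_smul, map_smul]
  rfl

lemma pi_single_sum (a : Fin n → K) : a = ∑ i, a i • (Pi.single i (1 : K) : Fin n → K) := by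
  ext j
  simp [Pi.single_apply]

def lUlin : (Fin n → K) →ₗ[K] Ualg K n where
  toFun := lU K n
  map_add' := lU_add K
  map_smul' c a := lU_smul K c a

def rUlin : (Fin n → K) →ₗ[K] Ualg K n where
  toFun := rU K n
  map_add' := rU_add K
  map_smul' c a := rU_smul K c a

lemma lU_sum_d (a : Fin n → K) : lU K n a = ∑ i, a i • lUd K n i := by
  have h : lU K n a = lUlin K (∑ i, a i • (Pi.single i (1 : K) : Fin n → K)) := by
    rw [← pi_single_sum]; rfl
  rw [h, map_sum]
  refine Finset.sum_congr rfl fun i _ => ?_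
  rw [map_smul]; rfl

lemma rU_sum_d (a : Fin n → K) : rU K n a = ∑ i, a i • rUd K n i := by
  have h : rU K n a = rUlin K (∑ i, a i • (Pi.single i (1 : K) : Fin n → K)) := by
    rw [← pi_single_sum]; rfl
  rw [h, map_sum]
  refine Finset.sum_congr rfl fun i _ => ?_
  rw [map_smul]; rfl

lemma mul_mono_mem {k : ℕ} (v : Ualg K n) (hv : v ∈ V K n) (b : B n) (hw : wtB b = k)
    (hg : goodB b) : v * mono K b ∈ P K (k + 1) := by
  subst hw
  induction hv using Submodule.span_induction with
  | mem x hx =>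
    rcases hx with ⟨a, rfl⟩ | ⟨a, rfl⟩
    · rw [lU_sum_d, Finset.sum_mul]
      exact Submodule.sum_mem _ fun i _ => by
        rw [smul_mul_assoc]
        exact Submodule.smul_mem _ _ (keyL K i b hg)
    · rw [rU_sum_d, Finset.sum_mul]
      exact Submodule.sum_mem _ fun i _ => by
        rw [smul_mul_assoc]
        exact Submodule.smul_mem _ _ (keyR K i b hg)
  | zero => rw [zero_mul]; exact Submodule.zero_mem _
  | add x y _ _ hx hy => rw [add_mul]; exact Submodule.add_mem _ hx hy
  | smul c x _ hx => rw [smul_mul_assoc]; exact Submodule.smul_mem _ _ hx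

lemma mul_P_mem {k : ℕ} (v : Ualg K n) (hv : v ∈ V K n) (w : Ualg K n) (hw : w ∈ P K k) :
    v * w ∈ P K (k + 1) := by
  induction hw using Submodule.span_induction with
  | mem x hx =>
    obtain ⟨b, ⟨hwt, hg⟩, rfl⟩ := hx
    exact mul_mono_mem K v hv b hwt hg
  | zero => rw [mul_zero]; exact Submodule.zero_mem _
  | add x y _ _ hx hy => rw [mul_add]; exact Submodule.add_mem _ hx hy
  | smul c x _ hx => rw [mul_smul_comm]; exact Submodule.smul_mem _ _ hx

lemma pow_le_P : ∀ k, V K n ^ k ≤ P K k := by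
  intro k
  induction k with
  | zero =>
    rw [pow_zero, Submodule.one_eq_span]
    rw [Submodule.span_le, Set.singleton_subset_iff]
    exact mono_mem_P K (b := B.emp) rfl trivial
  | succ k ih =>
    rw [pow_succ']
    exact Submodule.mul_le.mpr fun v hv w hw => mul_P_mem K v hv w (ih hw)

lemma lUd_mem_V (i : Fin n) : lUd K n i ∈ V K n :=
  Submodule.subset_span (Or.inl ⟨Pi.single i 1, rfl⟩)

lemma rUd_mem_V (i : Fin n) : rUd K n i ∈ V K n :=
  Submodule.subset_span (Or.inr ⟨Pi.single i 1, rfl⟩)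

lemma one_mem_pow_zero : (1 : Ualg K n) ∈ V K n ^ 0 := by
  rw [pow_zero]
  exact Submodule.one_le.mp le_rfl

lemma rlist_mem_pow : ∀ l : List (Fin n), rlist K l ∈ V K n ^ l.length := by
  intro l
  induction l with
  | nil => exact one_mem_pow_zero K
  | cons i t ih =>
    rw [rlist_cons, List.length_cons, pow_succ']
    exact Submodule.mul_mem_mul (rUd_mem_V K i) ih

lemma lword_mem_pow : ∀ l : List (Fin n), lword K l ∈ V K n ^ l.length := by
  intro l
  cases l with
  | nil => exact one_mem_pow_zero K
  | cons i t =>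
    show lUd K n i * rlist K t ∈ V K n ^ (t.length + 1)
    rw [pow_succ']
    exact Submodule.mul_mem_mul (lUd_mem_V K i) (rlist_mem_pow K t)

lemma P_le_pow (k : ℕ) : P K k ≤ V K n ^ k := by
  rw [P, Submodule.span_le]
  rintro x ⟨b, ⟨hwt, _⟩, rfl⟩
  subst hwt
  cases b with
  | emp => exact one_mem_pow_zero K
  | l1 i =>
    show lUd K n i ∈ V K n ^ 1
    rw [pow_one]; exact lUd_mem_V K i
  | r1 i =>
    show rUd K n i ∈ V K n ^ 1
    rw [pow_one]; exact rUd_mem_V K i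
  | l2 i j =>
    show lUd K n i * rUd K n j ∈ V K n ^ 2
    rw [sq]
    exact Submodule.mul_mem_mul (lUd_mem_V K i) (rUd_mem_V K j)
  | lw s =>
    show lword K (s.sort (· ≤ ·)) ∈ V K n ^ s.card
    have h := lword_mem_pow K (s.sort (· ≤ ·))
    rwa [Finset.length_sort] at h
  | rw s =>
    show rlist K (s.sort (· ≤ ·)) ∈ V K n ^ s.card
    have h := rlist_mem_pow K (s.sort (· ≤ ·))
    rwa [Finset.length_sort] at h

lemma P_eq_pow (k : ℕ) : P K k = V K n ^ k :=
  le_antisymm (P_le_pow K k) (pow_le_P K k)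

/-! ### Evaluation of the representation on canonical monomials -/

def vac : M K n := Finsupp.single .emp 1

def psi : Ualg K n →ₗ[K] M K n where
  toFun u := phi K u (vac K)
  map_add' u v := by show phi K (u + v) (vac K) = _; rw [map_add]; rfl
  map_smul' c u := by show phi K (c • u) (vac K) = _; rw [map_smul]; rfl

lemma phi_mul_apply (u v : Ualg K n) (m : M K n) :
    phi K (u * v) m = phi K u (phi K v m) := by
  rw [map_mul]; rfl

lemma jsgn_min (x : Fin n) (s : Finset (Fin n)) (h : ∀ y ∈ s, x < y) : jsgn K x s = 1 := by
  have hx : x ∉ s := fun hx => lt_irrefl x (h x hx)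
  rw [jsgn, if_neg hx, sgn]
  have he : s.filter (· < x) = ∅ := by
    refine Finset.filter_eq_empty_iff.mpr fun {y} hy => ?_
    exact not_lt.mpr (le_of_lt (h y hy))
  rw [he, Finset.card_empty, pow_zero]

lemma Wl_min (f : Finset (Fin n) → B n) (x : Fin n) (s : Finset (Fin n))
    (h : ∀ y ∈ s, x < y) : Wl K f [x] s = Finsupp.single (f (insert x s)) 1 := by
  unfold Wl
  rw [show Wsig K [x] s = jsgn K x s * Wsig K [] (insert x s) from rfl, jsgn_min K x s h,
    show Wsig K [] (insert x s) = (1:K) from rfl, one_mul, one_smul,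
    show Wst [x] s = insert x s from rfl]

def listB : List (Fin n) → B n
  | [] => .emp
  | [x] => .r1 x
  | l => .rw l.toFinset

lemma phi_rlist (l : List (Fin n)) (hs : l.Pairwise (· < ·)) :
    phi K (rlist K l) (vac K) = Finsupp.single (listB l) 1 := by
  induction l with
  | nil =>
    rw [rlist_nil, map_one]
    rfl
  | cons x t ih =>
    rw [rlist_cons, phi_mul_apply, ih hs.of_cons]
    have hx : phi K (rUd K n x) = (Rg K x : Module.End K (M K n)) := phi_rUd K x
    rw [hx]
    show Rg K x (Finsupp.single (listB t) 1) = _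
    rw [Rg_single, one_smul]
    match t with
    | [] => rfl
    | [y] =>
      show Wl K B.rw [y, x] ∅ = _
      have hxy : x < y := List.rel_of_pairwise_cons hs (by simp)
      rw [Wl_cons, jsgn_min K y ∅ (by simp), one_smul,
        Wl_min K B.rw x (insert y ∅) (by simpa using hxy)]
      show _ = Finsupp.single (B.rw ([x, y]).toFinset) 1
      rw [List.toFinset_cons, List.toFinset_cons, List.toFinset_nil]
    | y :: z :: u =>
      show Wl K B.rw [x] (y :: z :: u).toFinset = _
      rw [Wl_min K B.rw x _ (fun b hb => List.rel_of_pairwise_cons hs (by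
        simpa using List.mem_toFinset.mp hb))]
      show _ = Finsupp.single (B.rw (x :: y :: z :: u).toFinset) 1
      simp [List.toFinset_cons]

lemma phi_mono_vac (b : B n) (hg : goodB b) :
    phi K (mono K b) (vac K) = Finsupp.single b 1 := by
  cases b with
  | emp =>
    show phi K 1 (vac K) = _
    rw [map_one]
    rfl
  | l1 i =>
    show phi K (lUd K n i) (vac K) = _
    rw [phi_lUd]
    show Lg K i (Finsupp.single B.emp 1) = _
    rw [Lg_single, one_smul, Ltab_emp]
  | r1 i =>
    show phi K (rUd K n i) (vac K) = _
    rw [phi_rUd]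
    show Rg K i (Finsupp.single B.emp 1) = _
    rw [Rg_single, one_smul, Rtab_emp]
  | l2 i j =>
    show phi K (lUd K n i * rUd K n j) (vac K) = _
    rw [phi_mul_apply, phi_lUd, phi_rUd]
    show Lg K i (Rg K j (Finsupp.single B.emp 1)) = _
    rw [Rg_single, one_smul, Rtab_emp, Lg_single, one_smul, Ltab_r1]
  | lw s =>
    have hg' : 3 ≤ s.card := hg
    have hlen : (s.sort (· ≤ ·)).length = s.card := Finset.length_sort _
    have hsorted := (Finset.sortedLT_sort s).pairwise
    obtain ⟨h, y, z, u, hl⟩ : ∃ a b c u, s.sort (· ≤ ·) = a :: b :: c :: u := by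
      rcases hl : s.sort (· ≤ ·) with _ | ⟨a, _ | ⟨b, _ | ⟨c, u⟩⟩⟩ <;>
        first
          | (exfalso; rw [hl] at hlen; simp at hlen; omega)
          | exact ⟨_, _, _, _, rfl⟩
    show phi K (lword K (s.sort (· ≤ ·))) (vac K) = _
    rw [hl]
    show phi K (lUd K n h * rlist K (y :: z :: u)) (vac K) = _
    rw [phi_mul_apply, phi_lUd]
    have hs2 : (y :: z :: u).Pairwise (· < ·) := by
      rw [hl] at hsorted; exact hsorted.of_cons
    rw [phi_rlist K _ hs2]
    show Lg K h (Finsupp.single (B.rw (y :: z :: u).toFinset) 1) = _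
    rw [Lg_single, one_smul, Ltab_rw]
    have hlt : ∀ b ∈ (y :: z :: u).toFinset, h < b := by
      intro b hb
      rw [hl] at hsorted
      exact List.rel_of_pairwise_cons hsorted (by simpa using List.mem_toFinset.mp hb)
    rw [Wl_min K B.lw h _ hlt]
    have hfin : insert h (y :: z :: u).toFinset = s := by
      rw [← List.toFinset_cons, ← hl, Finset.sort_toFinset]
    rw [hfin]
  | rw s =>
    have hg' : 2 ≤ s.card := hg
    have hlen : (s.sort (· ≤ ·)).length = s.card := Finset.length_sort _
    obtain ⟨x, y, u, hl⟩ : ∃ a b u, s.sort (· ≤ ·) = a :: b :: u := by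
      rcases hl : s.sort (· ≤ ·) with _ | ⟨a, _ | ⟨b, u⟩⟩ <;>
        first
          | (exfalso; rw [hl] at hlen; simp at hlen; omega)
          | exact ⟨_, _, _, rfl⟩
    show phi K (rlist K (s.sort (· ≤ ·))) (vac K) = _
    rw [phi_rlist K _ ((Finset.sortedLT_sort s).pairwise), hl]
    show Finsupp.single (B.rw (x :: y :: u).toFinset) 1 = _
    rw [← hl, Finset.sort_toFinset]

/-! ### The basis of the weight component -/

def Ik (n k : ℕ) : Type := {b : B n // wtB b = k ∧ goodB b}

instance : Fintype (Ik n k) := by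
  unfold Ik; infer_instance

lemma indep (k : ℕ) : LinearIndependent K (fun b : Ik n k => mono K b.1) := by
  refine LinearIndependent.of_comp (psi K) ?_
  have h0 : LinearIndependent K (fun b : Ik n k => (Finsupp.single b.1 (1:K) : M K n)) := by
    have h1 := (Finsupp.basisSingleOne (R := K) (ι := B n)).linearIndependent
    have h2 := h1.comp (fun b : Ik n k => b.1) (fun a b hab => Subtype.ext hab)
    simpa [Finsupp.coe_basisSingleOne, Function.comp_def] using h2
  have heq : (⇑(psi K) ∘ fun b : Ik n k => mono K b.1)
      = fun b : Ik n k => (Finsupp.single b.1 (1:K) : M K n) := by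
    funext b
    exact phi_mono_vac K b.1 b.2.2
  rw [heq]
  exact h0

lemma span_range_eq (k : ℕ) :
    Submodule.span K (Set.range (fun b : Ik n k => mono K b.1)) = V K n ^ k := by
  rw [← P_eq_pow, P]
  congr 1
  ext x
  constructor
  · rintro ⟨b, rfl⟩
    exact ⟨b.1, b.2, rfl⟩
  · rintro ⟨b, hb, rfl⟩
    exact ⟨⟨b, hb⟩, rfl⟩

noncomputable def basisIk (k : ℕ) : Module.Basis (Ik n k) K ↥(V K n ^ k) :=
  (Module.Basis.span (indep K k)).map (LinearEquiv.ofEq _ _ (span_range_eq K k))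

/-! ### Counting the basis -/

lemma no_lw {n k : ℕ} (s : Finset (Fin n)) (h : wtB (B.lw s) = k ∧ goodB (B.lw s))
    (hk : k < 3) : False := by
  obtain ⟨h1, h2⟩ := h
  simp only [wtB] at h1
  simp only [goodB] at h2
  omega

lemma no_rw {n k : ℕ} (s : Finset (Fin n)) (h : wtB (B.rw s) = k ∧ goodB (B.rw s))
    (hk : k < 2) : False := by
  obtain ⟨h1, h2⟩ := h
  simp only [wtB] at h1
  simp only [goodB] at h2
  omega

def eqv0 (n : ℕ) : Ik n 0 ≃ Unit where
  toFun _ := ()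
  invFun _ := ⟨B.emp, rfl, trivial⟩
  left_inv := by
    rintro ⟨b, h⟩
    cases b with
    | emp => rfl
    | l1 i => exact False.elim (absurd h.1 (by simp only [wtB]; omega))
    | r1 i => exact False.elim (absurd h.1 (by simp only [wtB]; omega))
    | l2 i j => exact False.elim (absurd h.1 (by simp only [wtB]; omega))
    | lw s => exact False.elim (no_lw s h (by omega))
    | rw s => exact False.elim (no_rw s h (by omega))
  right_inv _ := rfl

def eqv1 (n : ℕ) : Ik n 1 ≃ (Fin n ⊕ Fin n) where
  toFun b :=
    match b with
    | ⟨B.l1 i, _⟩ => Sum.inl i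
    | ⟨B.r1 i, _⟩ => Sum.inr i
    | ⟨B.emp, h⟩ => False.elim (absurd h.1 (by simp only [wtB]; omega))
    | ⟨B.l2 i j, h⟩ => False.elim (absurd h.1 (by simp only [wtB]; omega))
    | ⟨B.lw s, h⟩ => False.elim (no_lw s h (by omega))
    | ⟨B.rw s, h⟩ => False.elim (no_rw s h (by omega))
  invFun x :=
    match x with
    | Sum.inl i => ⟨B.l1 i, rfl, trivial⟩
    | Sum.inr i => ⟨B.r1 i, rfl, trivial⟩
  left_inv := by
    rintro ⟨b, h⟩
    cases b with
    | l1 i => rfl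
    | r1 i => rfl
    | emp => exact False.elim (absurd h.1 (by simp only [wtB]; omega))
    | l2 i j => exact False.elim (absurd h.1 (by simp only [wtB]; omega))
    | lw s => exact False.elim (no_lw s h (by omega))
    | rw s => exact False.elim (no_rw s h (by omega))
  right_inv := by rintro (i | i) <;> rfl

def eqv2 (n : ℕ) : Ik n 2 ≃ ((Fin n × Fin n) ⊕ {s : Finset (Fin n) // s.card = 2}) where
  toFun b :=
    match b with
    | ⟨B.l2 i j, _⟩ => Sum.inl (i, j)
    | ⟨B.rw s, h⟩ => Sum.inr ⟨s, h.1⟩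
    | ⟨B.emp, h⟩ => False.elim (absurd h.1 (by simp only [wtB]; omega))
    | ⟨B.l1 i, h⟩ => False.elim (absurd h.1 (by simp only [wtB]; omega))
    | ⟨B.r1 i, h⟩ => False.elim (absurd h.1 (by simp only [wtB]; omega))
    | ⟨B.lw s, h⟩ => False.elim (no_lw s h (by omega))
  invFun x :=
    match x with
    | Sum.inl (i, j) => ⟨B.l2 i j, rfl, trivial⟩
    | Sum.inr ⟨s, hs⟩ => ⟨B.rw s, hs, by simp only [goodB]; omega⟩
  left_inv := by
    rintro ⟨b, h⟩
    cases b with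
    | l2 i j => rfl
    | rw s => rfl
    | emp => exact False.elim (absurd h.1 (by simp only [wtB]; omega))
    | l1 i => exact False.elim (absurd h.1 (by simp only [wtB]; omega))
    | r1 i => exact False.elim (absurd h.1 (by simp only [wtB]; omega))
    | lw s => exact False.elim (no_lw s h (by omega))
  right_inv := by rintro (⟨i, j⟩ | ⟨s, hs⟩) <;> rfl

def eqvBig (n k : ℕ) (hk : 3 ≤ k) :
    Ik n k ≃ ({s : Finset (Fin n) // s.card = k} ⊕ {s : Finset (Fin n) // s.card = k}) where
  toFun b :=
    match b with
    | ⟨B.lw s, h⟩ => Sum.inl ⟨s, h.1⟩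
    | ⟨B.rw s, h⟩ => Sum.inr ⟨s, h.1⟩
    | ⟨B.emp, h⟩ => False.elim (absurd h.1 (by simp only [wtB]; omega))
    | ⟨B.l1 i, h⟩ => False.elim (absurd h.1 (by simp only [wtB]; omega))
    | ⟨B.r1 i, h⟩ => False.elim (absurd h.1 (by simp only [wtB]; omega))
    | ⟨B.l2 i j, h⟩ => False.elim (absurd h.1 (by simp only [wtB]; omega))
  invFun x :=
    match x with
    | Sum.inl ⟨s, hs⟩ => ⟨B.lw s, hs, by simp only [goodB]; omega⟩
    | Sum.inr ⟨s, hs⟩ => ⟨B.rw s, hs, by simp only [goodB]; omega⟩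
  left_inv := by
    rintro ⟨b, h⟩
    cases b with
    | lw s => rfl
    | rw s => rfl
    | emp => exact False.elim (absurd h.1 (by simp only [wtB]; omega))
    | l1 i => exact False.elim (absurd h.1 (by simp only [wtB]; omega))
    | r1 i => exact False.elim (absurd h.1 (by simp only [wtB]; omega))
    | l2 i j => exact False.elim (absurd h.1 (by simp only [wtB]; omega))
  right_inv := by rintro (⟨s, hs⟩ | ⟨s, hs⟩) <;> rfl

lemma card0 (n : ℕ) : Fintype.card (Ik n 0) = 1 := by
  rw [Fintype.card_congr (eqv0 n)]
  simp

lemma card1 (n : ℕ) : Fintype.card (Ik n 1) = 2 * n := by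
  rw [Fintype.card_congr (eqv1 n)]
  simp [Fintype.card_sum]
  ring

lemma card2 (n : ℕ) : Fintype.card (Ik n 2) = (3 * n ^ 2 - n) / 2 := by
  rw [Fintype.card_congr (eqv2 n)]
  rw [Fintype.card_sum, Fintype.card_prod, Fintype.card_fin, Fintype.card_finset_len,
    Fintype.card_fin]
  have hch : (2 : ℕ) * Nat.choose n 2 = n * (n - 1) := by
    rw [Nat.choose_two_right]
    refine Nat.mul_div_cancel' ?_
    rcases n with _ | m
    · simp
    · have he : Even ((m + 1) * m) := by
        simpa [mul_comm] using Nat.even_mul_succ_self m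
      simpa [Nat.succ_sub_one] using he.two_dvd
  have hmul : n * (n - 1) = n * n - n := by
    rcases n with _ | m
    · simp
    · have : (m + 1) * (m + 1) = (m + 1) * m + (m + 1) := by ring
      simp only [Nat.succ_sub_one]
      omega
  have hle : n ≤ n * n := by nlinarith
  have key : ∀ a q : ℕ, 2 * q = a - n → n ≤ a → a + q = (3 * a - n) / 2 := by
    intro a q h1 h2
    omega
  rw [pow_two]
  exact key (n * n) (Nat.choose n 2) (by omega) hle

lemma cardBig (n k : ℕ) (hk : 3 ≤ k) : Fintype.card (Ik n k) = 2 * Nat.choose n k := by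
  rw [Fintype.card_congr (eqvBig n k hk)]
  rw [Fintype.card_sum, Fintype.card_finset_len, Fintype.card_fin]
  ring

end UEnv


/-- Over any commutative ring `K`, the weight-`k` component `U(K^n)_k` is a free `K`-module
of finite rank, of rank `1, 2n, (3n²−n)/2, 2·(n choose k)` for `k = 0, 1, 2, k ≥ 3`. -/
theorem weight_component_free (K : Type) [CommRing K] (n k : ℕ) :
    Nonempty (Module.Basis
      (Fin (if k = 0 then 1
            else if k = 1 then 2 * n
            else if k = 2 then (3 * n ^ 2 - n) / 2
            else 2 * n.choose k))
      K ↥(V K n ^ k)) := by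
  classical
  refine ⟨(UEnv.basisIk K (n := n) k).reindex (Fintype.equivFinOfCardEq ?_)⟩
  by_cases h0 : k = 0
  · subst h0
    simpa using UEnv.card0 n
  by_cases h1 : k = 1
  · subst h1
    simpa using UEnv.card1 n
  by_cases h2 : k = 2
  · subst h2
    simpa using UEnv.card2 n
  · rw [if_neg h0, if_neg h1, if_neg h2]
    exact UEnv.cardBig n k (by omega)

end
end

section
/- Let K be a field and n ≥ 1. Let E_n be the K-module K^n × U(K^n) equipped with the K-bilinear product (a, α)·(b, β) = (0, α·r_b + β·l_a) (products taken in the algebra U(K^n)). Then: (i) E_n satisfies the left and right alternative laws (xx)y = x(xy) and (xy)y = x(yy) for all x, y ∈ E_n; (ii) (uv)(xy) = 0 for all u, v, x, y ∈ E_n; and (iii) writing e_1, …, e_n for the standard basis of K^n, the left-normed product ((x_1 x_2) x_3 ⋯) x_n is nonzero, where x_1 = (0, r_{e_1}) and x_i = (e_i, 0) for 2 ≤ i ≤ n. -/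
/-!
Universal enveloping algebra of the abelian alternative algebra `K^n`.

`T = Tens_K(K^n ⊕ K^n)`; `l_a` (resp. `r_a`) is the image of `(a,0)` (resp. `(0,a)`).
`U(K^n)` is the quotient of `T` by the two-sided ideal generated by
`l_a·l_a`, `r_a·r_a`, `l_b·l_a + r_a·r_b`, `r_b·l_a − l_a·r_b − r_a·r_b`.
-/

noncomputable section

/-- The standard basis vector `e_i` of `K^n`. -/
def stdBasis (K : Type) [CommRing K] (n : ℕ) (i : Fin n) : Fin n → K :=
  Pi.single i 1

/-! ### Auxiliary constructions for the nontriviality part -/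

open ExteriorAlgebra in
/-- The 2×2-matrix algebra over the exterior algebra, used as a target representation. -/
abbrev Amat (K : Type) [Field K] (n : ℕ) :=
  Matrix (Fin 2) (Fin 2) (ExteriorAlgebra K (Fin n → K))

open ExteriorAlgebra in
def flin (K : Type) [Field K] (n : ℕ) : ((Fin n → K) × (Fin n → K)) →ₗ[K] Amat K n where
  toFun x := !![ι K x.1, ι K x.2 - ι K x.1; ι K x.2, - ι K x.1]
  map_add' x y := by
    ext i j
    fin_cases i <;> fin_cases j <;> simp [Matrix.add_apply] <;> abel
  map_smul' c x := by
    ext i j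
    fin_cases i <;> fin_cases j <;> simp [Matrix.smul_apply, smul_sub]

def phiA (K : Type) [Field K] (n : ℕ) :
    TensorAlgebra K ((Fin n → K) × (Fin n → K)) →ₐ[K] Amat K n :=
  TensorAlgebra.lift K (flin K n)

open ExteriorAlgebra in
lemma phiA_l (K : Type) [Field K] (n : ℕ) (a : Fin n → K) :
    phiA K n (lT K n a) = !![ι K a, - ι K a; 0, - ι K a] := by
  rw [phiA, lT, TensorAlgebra.lift_ι_apply]
  show !![ι K a, ι K 0 - ι K a; ι K 0, - ι K a] = _
  simp

open ExteriorAlgebra in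
lemma phiA_r (K : Type) [Field K] (n : ℕ) (a : Fin n → K) :
    phiA K n (rT K n a) = !![0, ι K a; ι K a, 0] := by
  rw [phiA, rT, TensorAlgebra.lift_ι_apply]
  show !![ι K 0, ι K a - ι K 0; ι K a, - ι K 0] = _
  simp

open ExteriorAlgebra in
lemma phiA_rel (K : Type) [Field K] (n : ℕ) :
    ∀ ⦃x y⦄, URel K n x y → phiA K n x = phiA K n y := by
  rintro x y (⟨a⟩ | ⟨a⟩ | ⟨a, b⟩ | ⟨a, b⟩)
  · simp only [map_mul, map_zero, phiA_l, Matrix.mul_fin_two]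
    ext i j
    fin_cases i <;> fin_cases j <;> simp [ι_sq_zero]
  · simp only [map_mul, map_zero, phiA_r, Matrix.mul_fin_two]
    ext i j
    fin_cases i <;> fin_cases j <;> simp [ι_sq_zero]
  · have hba : ι (R := K) (M := Fin n → K) b * ι K a = -(ι K a * ι K b) :=
      eq_neg_of_add_eq_zero_left (ι_add_mul_swap b a)
    simp only [map_add, map_mul, map_zero, phiA_l, phiA_r, Matrix.mul_fin_two]
    ext i j
    fin_cases i <;> fin_cases j <;> simp [hba, ι_sq_zero]
  · have hba : ι (R := K) (M := Fin n → K) b * ι K a = -(ι K a * ι K b) :=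
      eq_neg_of_add_eq_zero_left (ι_add_mul_swap b a)
    simp only [map_sub, map_mul, map_zero, phiA_l, phiA_r, Matrix.mul_fin_two]
    ext i j
    fin_cases i <;> fin_cases j <;> simp [Matrix.sub_apply, hba, ι_sq_zero]

def psiA (K : Type) [Field K] (n : ℕ) : Ualg K n →ₐ[K] Amat K n :=
  RingQuot.liftAlgHom K ⟨phiA K n, phiA_rel K n⟩

open ExteriorAlgebra in
lemma psiA_r (K : Type) [Field K] (n : ℕ) (a : Fin n → K) :
    psiA K n (rU K n a) = !![0, ι K a; ι K a, 0] := by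
  have h := RingQuot.liftAlgHom_mkAlgHom_apply (S := K) (phiA K n) (phiA_rel K n) (rT K n a)
  rw [phiA_r] at h
  exact h

open ExteriorAlgebra in
lemma psiA_fold (K : Type) [Field K] (n : ℕ) (L : List (Fin n → K)) (α : Ualg K n) :
    psiA K n (L.foldl (fun t a => t * rU K n a) α)
      = L.foldl (fun t a => t * !![0, ι K a; ι K a, 0]) (psiA K n α) := by
  induction L generalizing α with
  | nil => rfl
  | cons a L ih =>
    rw [List.foldl_cons, List.foldl_cons, ih, map_mul, psiA_r]

open ExteriorAlgebra in
lemma mat_fold (K : Type) [Field K] (n : ℕ) (L : List (Fin n → K)) (M : Amat K n) :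
    (L.foldl (fun t a => t * !![0, ι K a; ι K a, 0]) M) 0 0
      + (L.foldl (fun t a => t * !![0, ι K a; ι K a, 0]) M) 0 1
    = (M 0 0 + M 0 1) * (L.map fun a => ι K a).prod := by
  induction L generalizing M with
  | nil => simp
  | cons a L ih =>
    rw [List.foldl_cons, ih, List.map_cons, List.prod_cons]
    have h1 : (M * !![0, ι K a; ι K a, 0]) 0 0 = M 0 1 * ι K a := by
      simp [Matrix.mul_apply, Fin.sum_univ_two]
    have h2 : (M * !![0, ι K a; ι K a, 0]) 0 1 = M 0 0 * ι K a := by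
      simp [Matrix.mul_apply, Fin.sum_univ_two]
    rw [h1, h2]
    noncomm_ring

lemma det_std (K : Type) [Field K] (m : ℕ) :
    Matrix.detRowAlternating (R := K) (n := Fin (m+1)) (stdBasis K (m+1)) = 1 := by
  show Matrix.det (Matrix.of fun i => stdBasis K (m+1) i) = 1
  have : (Matrix.of fun i => stdBasis K (m+1) i) = (1 : Matrix (Fin (m+1)) (Fin (m+1)) K) := by
    ext i j
    simp [stdBasis, Matrix.one_apply, Pi.single_apply, eq_comm]
  rw [this, Matrix.det_one]

open ExteriorAlgebra in
lemma wedge_ne_zero (K : Type) [Field K] (m : ℕ) :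
    (List.ofFn fun i : Fin (m+1) => ι K (stdBasis K (m+1) i)).prod ≠ 0 := by
  intro h
  have h2 : ιMulti K (m+1) (stdBasis K (m+1)) = 0 := by
    rw [ιMulti_apply, h]
  set F : ∀ i, (Fin (m+1) → K) [⋀^Fin i]→ₗ[K] K := fun i =>
    if h : i = m + 1 then h ▸ Matrix.detRowAlternating else 0 with hF
  have h3 := liftAlternating_apply_ιMulti (n := m+1) F (stdBasis K (m+1))
  rw [h2, map_zero] at h3
  rw [hF] at h3
  simp only [dif_pos rfl] at h3
  rw [dif_pos trivial, det_std K m] at h3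
  exact one_ne_zero h3.symm

open ExteriorAlgebra in
/-- Let `E_n = K^n × U(K^n)` with the product `(a, α)·(b, β) = (0, α·r_b + β·l_a)`.
Then `E_n` satisfies the left and right alternative laws, every product of two products
vanishes, and yet the left-normed product `((x_1 x_2) x_3 ⋯) x_n` is nonzero, where
`x_1 = (0, r_{e_1})` and `x_i = (e_i, 0)` for `2 ≤ i ≤ n`. -/
theorem En_solvable_not_nilpotent (K : Type) [Field K] (n : ℕ) (hn : 1 ≤ n)
    (mul : ((Fin n → K) × Ualg K n) → ((Fin n → K) × Ualg K n) → ((Fin n → K) × Ualg K n))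
    (hmul : ∀ p q, mul p q = (0, p.2 * rU K n q.1 + q.2 * lU K n p.1)) :
    (∀ x y, mul (mul x x) y = mul x (mul x y)) ∧
    (∀ x y, mul (mul x y) y = mul x (mul y y)) ∧
    (∀ u v x y, mul (mul u v) (mul x y) = 0) ∧
    List.foldl mul ((0 : Fin n → K), rU K n (stdBasis K n ⟨0, hn⟩))
      (List.ofFn fun i : Fin (n - 1) =>
        ((stdBasis K n ⟨i.val + 1, by have := i.isLt; omega⟩, (0 : Ualg K n)))) ≠ 0 := by
  -- relations in `Ualg`
  have hll : ∀ a, lU K n a * lU K n a = 0 := fun a => by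
    have h := RingQuot.mkAlgHom_rel K (URel.ll a)
    rw [map_mul, map_zero] at h
    simp only [lU]
    exact h
  have hrr : ∀ a, rU K n a * rU K n a = 0 := fun a => by
    have h := RingQuot.mkAlgHom_rel K (URel.rr a)
    rw [map_mul, map_zero] at h
    simp only [rU]
    exact h
  have hllrr : ∀ a b, lU K n b * lU K n a = -(rU K n a * rU K n b) := fun a b => by
    have h := RingQuot.mkAlgHom_rel K (URel.llrr a b)
    rw [map_add, map_mul, map_mul, map_zero] at h
    simp only [lU, rU]
    exact eq_neg_of_add_eq_zero_left h
  have hrl : ∀ a b, rU K n b * lU K n a = lU K n a * rU K n b + rU K n a * rU K n b :=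
    fun a b => by
    have h := RingQuot.mkAlgHom_rel K (URel.rl a b)
    rw [map_sub, map_sub, map_mul, map_mul, map_mul, map_zero, sub_sub, sub_eq_zero] at h
    simp only [lU, rU]
    exact h
  have hl0 : lU K n 0 = 0 := by
    simp only [lU, lT]
    rw [show ((0 : Fin n → K), (0 : Fin n → K)) = 0 from rfl, map_zero, map_zero]
    rfl
  have hr0 : rU K n 0 = 0 := by
    simp only [rU, rT]
    rw [show ((0 : Fin n → K), (0 : Fin n → K)) = 0 from rfl, map_zero, map_zero]
    rfl
  refine ⟨fun x y => ?_, fun x y => ?_, fun u v x y => ?_, ?_⟩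
  · -- left alternative
    simp only [hmul, hl0, hr0, mul_zero, add_zero, zero_add, Prod.mk.injEq, true_and]
    rw [add_mul, add_mul, mul_assoc y.2 (lU K n x.1) (lU K n x.1), hll, mul_zero, add_zero,
      mul_assoc x.2 (rU K n y.1) (lU K n x.1), hrl]
    noncomm_ring
  · -- right alternative
    simp only [hmul, hl0, hr0, mul_zero, add_zero, zero_add, Prod.mk.injEq, true_and]
    rw [add_mul, add_mul, mul_assoc x.2 (rU K n y.1) (rU K n y.1), hrr, mul_zero, zero_add,
      mul_assoc y.2 (rU K n y.1) (lU K n x.1), hrl, mul_assoc y.2 (lU K n y.1) (lU K n x.1),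
      hllrr]
    noncomm_ring
  · -- products of products vanish
    simp only [hmul, hl0, hr0, mul_zero, add_zero, zero_add]
    rfl
  · -- nontriviality
    obtain ⟨m, rfl⟩ : ∃ m, n = m + 1 := ⟨n - 1, (Nat.succ_pred_eq_of_pos hn).symm⟩
    have fold_eq : ∀ (L : List (Fin (m+1) → K)) (α : Ualg K (m+1)),
        List.foldl mul (0, α) (L.map fun a => ((a, 0) : (Fin (m+1) → K) × Ualg K (m+1)))
          = (0, L.foldl (fun t a => t * rU K (m+1) a) α) := by
      intro L
      induction L with
      | nil => intro α; simp
      | cons a L ih =>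
        intro α
        rw [List.map_cons, List.foldl_cons, List.foldl_cons]
        have : mul (0, α) (a, 0) = ((0 : Fin (m+1) → K), α * rU K (m+1) a) := by
          rw [hmul]; simp
        rw [this, ih]
    have hlist : (List.ofFn fun i : Fin ((m+1) - 1) =>
          ((stdBasis K (m+1) ⟨i.val + 1, by have := i.isLt; omega⟩, (0 : Ualg K (m+1)))))
        = (List.ofFn fun i : Fin m => stdBasis K (m+1) i.succ).map
            (fun a => ((a, 0) : (Fin (m+1) → K) × Ualg K (m+1))) := by
      rw [List.map_ofFn]
      rfl
    rw [hlist, fold_eq]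
    intro hzero
    have hβ : (List.ofFn fun i : Fin m => stdBasis K (m+1) i.succ).foldl
        (fun t a => t * rU K (m+1) a) (rU K (m+1) (stdBasis K (m+1) ⟨0, hn⟩)) = 0 :=
      congrArg Prod.snd hzero
    have hψ := congrArg (psiA K (m+1)) hβ
    rw [map_zero, psiA_fold] at hψ
    have h0 : (⟨0, hn⟩ : Fin (m+1)) = 0 := rfl
    have hchain : ExteriorAlgebra.ι K (stdBasis K (m+1) (⟨0, hn⟩ : Fin (m+1))) *
        ((List.ofFn fun i : Fin m => stdBasis K (m+1) i.succ).map
          fun a => ExteriorAlgebra.ι K a).prod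
        = (List.ofFn fun i : Fin (m+1) => ExteriorAlgebra.ι K (stdBasis K (m+1) i)).prod := by
      rw [List.map_ofFn, List.ofFn_succ, List.prod_cons, h0]
      rfl
    have hsum := mat_fold K (m+1) (List.ofFn fun i : Fin m => stdBasis K (m+1) i.succ)
      (psiA K (m+1) (rU K (m+1) (stdBasis K (m+1) ⟨0, hn⟩)))
    rw [hψ, psiA_r] at hsum
    simp only [Matrix.zero_apply, add_zero] at hsum
    have hM : (!![(0 : ExteriorAlgebra K (Fin (m+1) → K)),
          ExteriorAlgebra.ι K (stdBasis K (m+1) ⟨0, hn⟩);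
          ExteriorAlgebra.ι K (stdBasis K (m+1) ⟨0, hn⟩), 0] 0 0 +
        !![(0 : ExteriorAlgebra K (Fin (m+1) → K)),
          ExteriorAlgebra.ι K (stdBasis K (m+1) ⟨0, hn⟩);
          ExteriorAlgebra.ι K (stdBasis K (m+1) ⟨0, hn⟩), 0] 0 1)
        = ExteriorAlgebra.ι K (stdBasis K (m+1) ⟨0, hn⟩) := by simp
    rw [hM, hchain] at hsum
    exact wedge_ne_zero K m hsum.symm


end
end

section
/- There exists a nonunital, nonassociative algebra E over ℚ (a ℚ-module with a ℚ-bilinear multiplication) such that: (i) E satisfies the alternative laws (xx)y = x(xy) and (xy)y = x(yy) for all x, y ∈ E; (ii) (uv)(xy) = 0 for all u, v, x, y ∈ E; and yet (iii) for every n ≥ 1 there exist elements x_1, …, x_n ∈ E whose left-normed product ((x_1 x_2) x_3 ⋯) x_n is nonzero. In particular there is an alternative algebra of solvability index 2 that is not nilpotent. -/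
/-- A (nonunital, nonassociative) algebra over `ℚ`: a `ℚ`-module equipped with a
`ℚ`-bilinear multiplication. -/
structure QAlgebra where
  carrier : Type
  [addCommGroup : AddCommGroup carrier]
  [module : Module ℚ carrier]
  mul : carrier →ₗ[ℚ] carrier →ₗ[ℚ] carrier

attribute [instance] QAlgebra.addCommGroup QAlgebra.module

noncomputable section AuxConstruction
open ExteriorAlgebra CliffordAlgebra

/-- The space of generators. -/
abbrev Vv : Type := ℕ →₀ ℚ
/-- The exterior algebra on the generators. -/
abbrev Gg : Type := ExteriorAlgebra ℚ Vv
/-- Two copies of the exterior algebra (a module over `ℚ(ω)`, `ω` a primitive cube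
root of unity, with `ω • (p, q) = (-q, p - q)`). -/
abbrev Ww : Type := Gg × Gg

/-- The multiplication of our algebra `E = Vv ⊕ Ww`:
`(a, u) * (b, v) = (0, β a b + L a v + R b u)` where `β a b = (ι a * ι b, 0)`,
`R b u = u * ι b` componentwise, and `L a v = ω ^ deg • (v * ι a)` (i.e. `ω` on the
even part, `ω²` on the odd part, expressed below via the grade involution). -/
def mulF (x y : Vv × Ww) : Vv × Ww :=
  (0, (ι ℚ x.1 * ι ℚ y.1
        + (-(involute y.2.2) - (2⁻¹:ℚ) • y.2.1 + (2⁻¹:ℚ) • involute y.2.1) * ι ℚ x.1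
        + x.2.1 * ι ℚ y.1,
       (involute y.2.1 - (2⁻¹:ℚ) • y.2.2 - (2⁻¹:ℚ) • involute y.2.2) * ι ℚ x.1
        + x.2.2 * ι ℚ y.1))

/-- `mulF` as a `ℚ`-bilinear map. -/
def mulQ : (Vv × Ww) →ₗ[ℚ] (Vv × Ww) →ₗ[ℚ] (Vv × Ww) :=
  LinearMap.mk₂ ℚ mulF
    (by
      intro x x' y
      simp only [mulF, Prod.fst_add, Prod.snd_add, map_add, Prod.mk_add_mk]
      refine Prod.ext (by simp) (Prod.ext ?_ ?_) <;>
        · simp only [add_mul, mul_add, sub_mul, neg_mul, smul_mul_assoc]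
          try module)
    (by
      intro c x y
      simp only [mulF, Prod.smul_fst, Prod.smul_snd, map_smul, Prod.smul_mk]
      refine Prod.ext (by simp) (Prod.ext ?_ ?_) <;>
        · simp only [add_mul, mul_add, sub_mul, neg_mul, smul_mul_assoc, mul_smul_comm,
            smul_add, smul_sub, smul_neg, smul_smul]
          try module)
    (by
      intro x y y'
      simp only [mulF, Prod.fst_add, Prod.snd_add, map_add, Prod.mk_add_mk]
      refine Prod.ext (by simp) (Prod.ext ?_ ?_) <;>
        · simp only [add_mul, mul_add, sub_mul, neg_mul, smul_mul_assoc, neg_add,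
            smul_add, sub_eq_add_neg]
          try module)
    (by
      intro c x y
      simp only [mulF, Prod.smul_fst, Prod.smul_snd, map_smul, Prod.smul_mk]
      refine Prod.ext (by simp) (Prod.ext ?_ ?_) <;>
        · simp only [add_mul, mul_add, sub_mul, neg_mul, smul_mul_assoc, mul_smul_comm,
            smul_add, smul_sub, smul_neg, smul_smul]
          try module)

lemma law1 (x y : Vv × Ww) : mulF (mulF x x) y = mulF x (mulF x y) := by
  obtain ⟨a, p, q⟩ := x
  obtain ⟨b, r, s⟩ := y
  have hsqa : ∀ t : Gg, t * ι ℚ a * ι ℚ a = 0 := fun t => by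
    rw [mul_assoc, ι_sq_zero, mul_zero]
  have hsqb : ∀ t : Gg, t * ι ℚ b * ι ℚ b = 0 := fun t => by
    rw [mul_assoc, ι_sq_zero, mul_zero]
  have hba : ∀ t : Gg, t * ι ℚ b * ι ℚ a = -(t * ι ℚ a * ι ℚ b) := fun t => by
    rw [mul_assoc, mul_assoc, eq_neg_of_add_eq_zero_left (ι_add_mul_swap b a), mul_neg]
  refine Prod.ext rfl (Prod.ext ?_ ?_) <;>
    · simp only [mulF, map_zero, zero_mul, mul_zero, add_mul, sub_mul, neg_mul,
        smul_mul_assoc, map_add, map_sub, map_neg, map_smul, map_mul, involute_ι,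
        involute_involute, mul_neg, neg_neg, ι_sq_zero, hsqa, hsqb, hba,
        zero_add, add_zero, neg_zero, smul_zero, smul_neg, smul_add, smul_sub, smul_smul]
      try module

lemma law2 (x y : Vv × Ww) : mulF (mulF x y) y = mulF x (mulF y y) := by
  obtain ⟨a, p, q⟩ := x
  obtain ⟨b, r, s⟩ := y
  have hsqa : ∀ t : Gg, t * ι ℚ a * ι ℚ a = 0 := fun t => by
    rw [mul_assoc, ι_sq_zero, mul_zero]
  have hsqb : ∀ t : Gg, t * ι ℚ b * ι ℚ b = 0 := fun t => by
    rw [mul_assoc, ι_sq_zero, mul_zero]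
  have hba : ∀ t : Gg, t * ι ℚ b * ι ℚ a = -(t * ι ℚ a * ι ℚ b) := fun t => by
    rw [mul_assoc, mul_assoc, eq_neg_of_add_eq_zero_left (ι_add_mul_swap b a), mul_neg]
  refine Prod.ext rfl (Prod.ext ?_ ?_) <;>
    · simp only [mulF, map_zero, zero_mul, mul_zero, add_mul, sub_mul, neg_mul,
        smul_mul_assoc, map_add, map_sub, map_neg, map_smul, map_mul, involute_ι,
        involute_involute, mul_neg, neg_neg, ι_sq_zero, hsqa, hsqb, hba,
        zero_add, add_zero, neg_zero, smul_zero, smul_neg, smul_add, smul_sub, smul_smul]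
      try module

lemma law3 (u v x y : Vv × Ww) : mulF (mulF u v) (mulF x y) = 0 := by
  simp only [mulF, map_zero, zero_mul, mul_zero, add_zero, zero_add]
  refine Prod.ext rfl (Prod.ext ?_ ?_) <;> simp

/-- The generators, as elements of `Vv`. -/
def ee (i : ℕ) : Vv := Finsupp.single i 1

/-- The generators, as elements of `E = Vv × Ww`. -/
def XX (i : ℕ) : Vv × Ww := (ee i, 0)

/-- Left-normed monomials in the exterior algebra. -/
def DD : ℕ → Gg
  | 0 => ι ℚ (ee 0)
  | k+1 => DD k * ι ℚ (ee (k+1))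

/-- A family of alternating forms used to show `DD k ≠ 0`. -/
def ff (i : ℕ) : Vv [⋀^Fin i]→ₗ[ℚ] ℚ :=
  (Matrix.detRowAlternating).compLinearMap
    (LinearMap.pi fun j : Fin i => (Finsupp.lapply (j : ℕ) : Vv →ₗ[ℚ] ℚ))

lemma DD_eq (k : ℕ) : DD k = ιMulti ℚ (k+1) (fun i : Fin (k+1) => ee i) := by
  induction k with
  | zero => simp [DD, ιMulti_apply, List.ofFn_succ]
  | succ k ih =>
    rw [ιMulti_apply, List.ofFn_succ', List.concat_eq_append, List.prod_append]
    simp only [List.prod_cons, List.prod_nil, mul_one, Fin.coe_castSucc, Fin.val_last]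
    rw [DD, ih, ιMulti_apply]

lemma lift_DD (k : ℕ) : liftAlternating (R := ℚ) ff (DD k) = 1 := by
  rw [DD_eq, liftAlternating_apply_ιMulti]
  have : (fun i : Fin (k+1) => (LinearMap.pi fun j : Fin (k+1) =>
      (Finsupp.lapply (j : ℕ) : Vv →ₗ[ℚ] ℚ)) (ee i))
      = fun i => (1 : Matrix (Fin (k+1)) (Fin (k+1)) ℚ) i := by
    funext i j
    simp [ee, Finsupp.single_apply, Matrix.one_apply, Fin.val_inj]
  rw [ff]
  simp only [AlternatingMap.compLinearMap_apply, this]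
  show Matrix.det 1 = 1
  simp

lemma DD_ne (k : ℕ) : DD k ≠ 0 := by
  intro h
  have := lift_DD k
  rw [h, map_zero] at this
  exact one_ne_zero this.symm

lemma foldl_eq (m : ℕ) :
    List.foldl (fun a b => mulQ a b) (XX 0)
      ((List.range (m + 1)).map fun i => XX (i + 1)) = (0, (DD (m + 1), 0)) := by
  induction m with
  | zero =>
    show mulQ (XX 0) (XX 1) = _
    simp [mulQ, LinearMap.mk₂_apply, mulF, XX, DD, Prod.ext_iff]
  | succ m ih =>
    rw [List.range_succ, List.map_append, List.foldl_append, ih]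
    show mulQ (0, (DD (m + 1), 0)) (XX (m + 2)) = _
    simp [mulQ, LinearMap.mk₂_apply, mulF, XX, Prod.ext_iff]
    rfl

end AuxConstruction

/-- There is an alternative algebra over `ℚ` of solvability index 2 that is not
nilpotent: it satisfies the alternative laws, all products of two products vanish,
yet for every `n ≥ 1` some left-normed product of `n` elements is nonzero. -/
theorem exists_solvable_not_nilpotent_alternative_algebra :
    ∃ E : QAlgebra,
      (∀ x y : E.carrier, E.mul (E.mul x x) y = E.mul x (E.mul x y)) ∧
      (∀ x y : E.carrier, E.mul (E.mul x y) y = E.mul x (E.mul y y)) ∧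
      (∀ u v x y : E.carrier, E.mul (E.mul u v) (E.mul x y) = 0) ∧
      (∀ n : ℕ, 1 ≤ n → ∃ x : ℕ → E.carrier,
        List.foldl (fun a b => E.mul a b) (x 0)
          ((List.range (n - 1)).map fun i => x (i + 1)) ≠ 0) := by
  refine ⟨⟨Vv × Ww, mulQ⟩, ?_, ?_, ?_, ?_⟩
  · intro x y
    show mulQ (mulQ x x) y = mulQ x (mulQ x y)
    simp only [mulQ, LinearMap.mk₂_apply]
    exact law1 x y
  · intro x y
    show mulQ (mulQ x y) y = mulQ x (mulQ y y)
    simp only [mulQ, LinearMap.mk₂_apply]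
    exact law2 x y
  · intro u v x y
    show mulQ (mulQ u v) (mulQ x y) = 0
    simp only [mulQ, LinearMap.mk₂_apply]
    exact law3 u v x y
  · intro n hn
    refine ⟨fun i => XX i, ?_⟩
    show List.foldl (fun a b => mulQ a b) (XX 0)
        ((List.range (n - 1)).map fun i => XX (i + 1)) ≠ 0
    match n, hn with
    | 1, _ =>
      simp only [Nat.sub_self, List.range_zero, List.map_nil, List.foldl_nil]
      intro h
      have : ee 0 = 0 := congrArg Prod.fst h
      exact one_ne_zero (Finsupp.single_eq_zero.mp this)
    | (m + 2), _ =>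
      have h2 : m + 2 - 1 = m + 1 := rfl
      rw [h2, foldl_eq m]
      intro h
      exact DD_ne (m + 1) (congrArg (fun z => z.2.1) h)
end

section
/- Let M = {a, b, c} be the magma with multiplication table aa = a, ab = a, ac = c, ba = a, bb = b, bc = b, ca = c, cb = b, cc = c. Then: (i) M is a commutative magma satisfying the alternative laws (xx)y = x(xy) and (xy)y = x(yy) for all x, y ∈ M; but (ii) for any nontrivial commutative ring K, the magma algebra KM (the free K-module on M with product extended K-bilinearly from the product of M) is not alternative: specifically, ((a+b)(a+b))·c ≠ (a+b)·((a+b)c) in KM. -/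
/-- The three-element magma `{a, b, c}` with multiplication table
`aa = a, ab = a, ac = c, ba = a, bb = b, bc = b, ca = c, cb = b, cc = c`. -/
inductive M3 : Type
  | a : M3
  | b : M3
  | c : M3

instance : Mul M3 :=
  ⟨fun x y =>
    match x, y with
    | .a, .a => .a
    | .a, .b => .a
    | .a, .c => .c
    | .b, .a => .a
    | .b, .b => .b
    | .b, .c => .b
    | .c, .a => .c
    | .c, .b => .b
    | .c, .c => .c⟩

instance : DecidableEq M3 := fun x y => by
  cases x <;> cases y <;> first | exact isTrue rfl | exact isFalse (fun h => M3.noConfusion h)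

/-- The magma `M3` is commutative and alternative, but for any nontrivial commutative
ring `K` the magma algebra `K·M3` is not alternative:
`((a+b)(a+b))·c ≠ (a+b)·((a+b)c)`. -/
theorem magmaAlgebra_not_alternative (K : Type) [CommRing K] [Nontrivial K] :
    ((∀ x y : M3, x * y = y * x) ∧
     (∀ x y : M3, x * x * y = x * (x * y)) ∧
     (∀ x y : M3, x * y * y = x * (y * y))) ∧
    (let A : MonoidAlgebra K M3 := MonoidAlgebra.single M3.a 1
     let B : MonoidAlgebra K M3 := MonoidAlgebra.single M3.b 1
     let C : MonoidAlgebra K M3 := MonoidAlgebra.single M3.c 1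
     ((A + B) * (A + B)) * C ≠ (A + B) * ((A + B) * C)) := by
  refine ⟨⟨fun x y => by cases x <;> cases y <;> rfl,
           fun x y => by cases x <;> cases y <;> rfl,
           fun x y => by cases x <;> cases y <;> rfl⟩, ?_⟩
  intro A B C h
  have := congrArg (fun f : MonoidAlgebra K M3 => f.coeff M3.a) h
  simp only [A, B, C, add_mul, mul_add, MonoidAlgebra.single_mul_single, one_mul] at this
  rw [show M3.a * M3.a * M3.c = M3.c from rfl, show M3.b * M3.a * M3.c = M3.c from rfl,
    show M3.a * M3.b * M3.c = M3.c from rfl, show M3.b * M3.b * M3.c = M3.b from rfl,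
    show M3.a * (M3.a * M3.c) = M3.c from rfl, show M3.b * (M3.a * M3.c) = M3.b from rfl,
    show M3.a * (M3.b * M3.c) = M3.a from rfl, show M3.b * (M3.b * M3.c) = M3.b from rfl] at this
  simp only [MonoidAlgebra.coeff_add, MonoidAlgebra.coeff_single] at this
  repeat rw [Finsupp.add_apply] at this
  repeat rw [Finsupp.single_apply] at this
  simp at this
end
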